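/- arXiv:2209.07927 — 3 statements merged into one kernel-verified Lean document; each statement's English description precedes it below -/
import Mathlib

section
/- Let q be a prime power, let n and t be integers with 1 ≤ t ≤ n, and let Y be a nonempty subset of GL(n,q). For each k ≥ 0 define A'_k = (1/|Y|) Σ_{x,y ∈ Y} U_k(q^{n − rank(x − y)}) (the diagonal terms, with x = y, contribute U_k(q^n)). If Y is a t-design in GL(n,q), then A'_k = 0 for all k with 1 ≤ k ≤ t. Conversely, if t ≤ n/2 and A'_k = 0 for all k with 1 ≤ k ≤ t, then Y is a t-design in GL(n,q). -/
/-- The `q`-analogue `[m]_q = 1 + q + ⋯ + q^{m-1}` of the natural number `m`. -/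
def qInt (q m : ℕ) : ℕ := ∑ i ∈ Finset.range m, q ^ i

/-- The `q`-factorial `[m]_q! = [m]_q [m-1]_q ⋯ [1]_q`. -/
def qFactorial (q m : ℕ) : ℕ := ∏ i ∈ Finset.range m, qInt q (i + 1)

/-- The Gaussian binomial coefficient `[m choose k]_q = [m]_q! / ([k]_q! [m-k]_q!)`. -/
def qBinom (q m k : ℕ) : ℕ := qFactorial q m / (qFactorial q k * qFactorial q (m - k))

/-- The Al-Salam–Carlitz polynomial (with parameter `a = 1`). -/
noncomputable def ascU (q k : ℕ) (x : ℝ) : ℝ :=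
  ∑ j ∈ Finset.range (k + 1),
    (-1 : ℝ) ^ (k - j) * (q : ℝ) ^ Nat.choose (k - j) 2 * (qBinom q k j : ℝ) *
      ∏ i ∈ Finset.range j, (x - (q : ℝ) ^ i)

/-- A subset `Y` of `GL(n,q)` is a `t`-design if it is transitive on ordered `t`-tuples of
linearly independent vectors of `F_q^n`: there is a constant `r` such that for any two
linearly independent `t`-tuples `a`, `b` there are exactly `r` elements `g ∈ Y` with
`g·(a m) = b m` for all `m`. -/
def IsTDesignGL (F : Type) [Field F] [Fintype F] (n t : ℕ) (Y : Set (GL (Fin n) F)) : Prop :=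
  ∃ r : ℕ, ∀ a b : Fin t → (Fin n → F), LinearIndependent F a → LinearIndependent F b →
    Nat.card {g : GL (Fin n) F // g ∈ Y ∧
      ∀ m, Matrix.mulVec (g : Matrix (Fin n) (Fin n) F) (a m) = b m} = r

def gb (q : ℕ) : ℕ → ℕ → ℕ
  | _, 0 => 1
  | 0, _+1 => 0
  | m+1, k+1 => q ^ (k+1) * gb q m (k+1) + gb q m k

lemma qInt_pos (q : ℕ) {m : ℕ} (hm : 1 ≤ m) : 0 < qInt q m := by
  unfold qInt
  refine Finset.sum_pos' (fun i _ => Nat.zero_le _) ⟨0, Finset.mem_range.2 hm, by simp⟩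

lemma qFactorial_pos (q m : ℕ) : 0 < qFactorial q m := by
  unfold qFactorial
  exact Finset.prod_pos fun i _ => qInt_pos q (Nat.le_add_left 1 i)

lemma qInt_add (q a b : ℕ) : qInt q (a + b) = qInt q a + q ^ a * qInt q b := by
  unfold qInt
  rw [Finset.sum_range_add, Finset.mul_sum]
  simp [pow_add]

lemma gb_zero (q m : ℕ) : gb q m 0 = 1 := by cases m <;> rfl

lemma gb_eq_zero (q : ℕ) : ∀ {m k}, m < k → gb q m k = 0 := by
  intro m
  induction m with
  | zero => intro k hk; match k, hk with | k+1, _ => rfl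
  | succ m ih =>
    intro k hk
    match k, hk with
    | k+1, hk =>
      show q ^ (k+1) * gb q m (k+1) + gb q m k = 0
      rw [ih (by omega), ih (by omega)]
      simp

lemma gb_self (q m : ℕ) : gb q m m = 1 := by
  induction m with
  | zero => rfl
  | succ m ih =>
    show q ^ (m+1) * gb q m (m+1) + gb q m m = 1
    rw [gb_eq_zero q (by omega), ih]; simp

lemma gb_mul (q : ℕ) : ∀ {m k}, k ≤ m →
    gb q m k * (qFactorial q k * qFactorial q (m - k)) = qFactorial q m := by
  intro m
  induction m with
  | zero => intro k hk; interval_cases k; simp [gb_zero, qFactorial]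
  | succ m ih =>
    intro k hk
    have hfact : ∀ j : ℕ, qFactorial q (j+1) = qFactorial q j * qInt q (j+1) := by
      intro j; unfold qFactorial; rw [Finset.prod_range_succ]
    match k with
    | 0 => simp [gb_zero, qFactorial]
    | k+1 =>
      show (q ^ (k+1) * gb q m (k+1) + gb q m k) * _ = _
      rcases Nat.lt_or_ge k m with hkm | hkm
      · -- k+1 ≤ m
        have e1 : gb q m (k+1) * (qFactorial q (k+1) * qFactorial q (m - (k+1))) =
            qFactorial q m := ih hkm
        have e2 : gb q m k * (qFactorial q k * qFactorial q (m - k)) = qFactorial q m :=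
          ih (by omega)
        obtain ⟨s, hs1, hs2⟩ : ∃ s, m - (k+1) = s ∧ m - k = s + 1 := ⟨m-(k+1), rfl, by omega⟩
        rw [hs1] at e1
        rw [hs2] at e2
        have hq1 : qInt q (m+1) = qInt q (k+1) + q ^ (k+1) * qInt q (s+1) := by
          rw [← qInt_add q (k+1) (s+1), show k+1+(s+1) = m+1 by omega]
        rw [show m + 1 - (k+1) = s + 1 by omega]
        calc (q ^ (k+1) * gb q m (k+1) + gb q m k) *
              (qFactorial q (k+1) * qFactorial q (s+1))
            = q ^ (k+1) * qInt q (s+1) * (gb q m (k+1) *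
                (qFactorial q (k+1) * qFactorial q s)) +
              qInt q (k+1) * (gb q m k * (qFactorial q k * qFactorial q (s+1))) := by
              rw [hfact s, hfact k]; ring
          _ = qFactorial q m * qInt q (m+1) := by rw [e1, e2, hq1]; ring
          _ = qFactorial q (m+1) := (hfact m).symm
      · -- k = m
        have hk' : k = m := by omega
        subst hk'
        rw [gb_eq_zero q (Nat.lt_succ_self k), gb_self, Nat.sub_self]
        simp [hfact k, qFactorial]

lemma qBinom_eq_gb (q : ℕ) {m k : ℕ} (h : k ≤ m) : qBinom q m k = gb q m k := by
  unfold qBinom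
  rw [← gb_mul q h, Nat.mul_div_cancel _
    (Nat.mul_pos (qFactorial_pos q k) (qFactorial_pos q (m-k)))]

lemma gb_symm (q : ℕ) {m k : ℕ} (h : k ≤ m) : gb q m (m - k) = gb q m k := by
  have h1 := gb_mul q (Nat.sub_le m k)
  rw [Nat.sub_sub_self h] at h1
  have h2 := gb_mul q h
  have := h1.trans h2.symm
  have hpos : 0 < qFactorial q k * qFactorial q (m-k) :=
    Nat.mul_pos (qFactorial_pos q k) (qFactorial_pos q (m-k))
  exact Nat.eq_of_mul_eq_mul_right hpos (by linarith [this, mul_comm (qFactorial q (m-k)) (qFactorial q k)] )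

lemma gauss (q : ℕ) {k : ℕ} (hk : 1 ≤ k) :
    ∑ i ∈ Finset.range (k+1), (-1:ℝ)^i * (q:ℝ)^(Nat.choose i 2) * (gb q k i : ℝ) = 0 := by
  obtain ⟨k, rfl⟩ : ∃ m, k = m + 1 := ⟨k - 1, by omega⟩
  set g : ℕ → ℝ := fun i => (-1:ℝ)^i * (q:ℝ)^(Nat.choose i 2 + i) * (gb q k i : ℝ) with hg
  have hch : ∀ i : ℕ, Nat.choose (i+1) 2 = Nat.choose i 2 + i := by
    intro i
    rw [Nat.choose_succ_succ i 1, Nat.choose_one_right]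
    norm_num
    try omega
  rw [Finset.sum_range_succ']
  have h1 : ∀ i ∈ Finset.range (k+1),
      (-1:ℝ)^(i+1) * (q:ℝ)^(Nat.choose (i+1) 2) * (gb q (k+1) (i+1) : ℝ) = g (i+1) - g i := by
    intro i _
    have hrec : gb q (k+1) (i+1) = q^(i+1) * gb q k (i+1) + gb q k i := rfl
    rw [hrec, hg]
    push_cast [hch]
    ring
  rw [Finset.sum_congr rfl h1, Finset.sum_range_sub g]
  simp [hg, gb_zero, gb_eq_zero q (Nat.lt_succ_self k)]


section Counting
variable {F : Type} [Field F] [Fintype F] [DecidableEq F] {n : ℕ}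

lemma card_li_mem (W : Submodule F (Fin n → F)) (j : ℕ) :
    Nat.card {a : Fin j → (Fin n → F) // LinearIndependent F a ∧ ∀ m, a m ∈ W}
      = ∏ i ∈ Finset.range j,
          (Fintype.card F ^ Module.finrank F W - Fintype.card F ^ i) := by
  have e : {a : Fin j → (Fin n → F) // LinearIndependent F a ∧ ∀ m, a m ∈ W}
      ≃ {s : Fin j → W // LinearIndependent F s} := by
    refine
      { toFun := fun a => ⟨fun m => ⟨a.1 m, a.2.2 m⟩, ?_⟩
        invFun := fun s => ⟨fun m => (s.1 m : Fin n → F), ?_, fun m => (s.1 m).2⟩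
        left_inv := fun a => rfl
        right_inv := fun s => rfl }
    · exact ((W.subtype).linearIndependent_iff W.ker_subtype).mp
        (by exact a.2.1)
    · exact ((W.subtype).linearIndependent_iff W.ker_subtype).mpr s.2
  rw [Nat.card_congr e]
  rcases le_or_gt j (Module.finrank F W) with hj | hj
  · rw [card_linearIndependent hj]
    exact Fin.prod_univ_eq_prod_range (fun i => Fintype.card F ^ Module.finrank F W - Fintype.card F ^ i) j
  · have hempty : IsEmpty {s : Fin j → W // LinearIndependent F s} := by
      refine ⟨fun s => ?_⟩
      have := s.2.fintype_card_le_finrank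
      simp only [Fintype.card_fin] at this
      omega
    rw [Nat.card_of_isEmpty]
    refine (Finset.prod_eq_zero (Finset.mem_range.2 hj) ?_).symm
    simp

lemma finrank_ker_eq (M : Matrix (Fin n) (Fin n) F) :
    Module.finrank F (LinearMap.ker M.mulVecLin) = n - M.rank := by
  have h := LinearMap.finrank_range_add_finrank_ker M.mulVecLin
  rw [Module.finrank_fintype_fun_eq_card, Fintype.card_fin] at h
  have : M.rank = Module.finrank F (LinearMap.range M.mulVecLin) := rfl
  omega

lemma card_li_ker (M : Matrix (Fin n) (Fin n) F) (j : ℕ) :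
    Nat.card {a : Fin j → (Fin n → F) // LinearIndependent F a ∧ ∀ m, M.mulVec (a m) = 0}
      = ∏ i ∈ Finset.range j, (Fintype.card F ^ (n - M.rank) - Fintype.card F ^ i) := by
  rw [← finrank_ker_eq M, ← card_li_mem (LinearMap.ker M.mulVecLin) j]
  exact Nat.card_congr (Equiv.subtypeEquivRight (by
    intro a
    simp [LinearMap.mem_ker, Matrix.mulVecLin_apply]))

end Counting


section GLfacts
variable {F : Type} [Field F] [Fintype F] [DecidableEq F] {n : ℕ}

lemma mulVec_injective (g : GL (Fin n) F) :
    Function.Injective fun v => Matrix.mulVec (↑g : Matrix (Fin n) (Fin n) F) v := by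
  intro u v huv
  have h : ∀ w, (↑g⁻¹ : Matrix (Fin n) (Fin n) F).mulVec ((↑g : Matrix (Fin n) (Fin n) F).mulVec w) = w := by
    intro w
    rw [Matrix.mulVec_mulVec, ← Matrix.GeneralLinearGroup.coe_mul, inv_mul_cancel,
      Matrix.GeneralLinearGroup.coe_one, Matrix.one_mulVec]
  rw [← h u, ← h v]
  simp only at huv
  rw [huv]

lemma linInd_mulVec (g : GL (Fin n) F) {j : ℕ} {a : Fin j → Fin n → F}
    (ha : LinearIndependent F a) :
    LinearIndependent F (fun m => Matrix.mulVec (↑g : Matrix (Fin n) (Fin n) F) (a m)) := by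
  have h := ((Matrix.mulVecLin (↑g : Matrix (Fin n) (Fin n) F)).linearIndependent_iff
    (LinearMap.ker_eq_bot.2 (mulVec_injective g))).2 ha
  exact h

/-- Build a `GL` element from a linear self-equivalence. -/
noncomputable def glOfEquiv (e : (Fin n → F) ≃ₗ[F] (Fin n → F)) : GL (Fin n) F :=
  ⟨LinearMap.toMatrix' (e : (Fin n → F) →ₗ[F] (Fin n → F)),
   LinearMap.toMatrix' (e.symm : (Fin n → F) →ₗ[F] (Fin n → F)),
   by
    rw [← LinearMap.toMatrix'_comp]
    have : (e : (Fin n → F) →ₗ[F] (Fin n → F)).comp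
        (e.symm : (Fin n → F) →ₗ[F] (Fin n → F)) = LinearMap.id := by
      ext v; simp
    rw [this, LinearMap.toMatrix'_id],
   by
    rw [← LinearMap.toMatrix'_comp]
    have : (e.symm : (Fin n → F) →ₗ[F] (Fin n → F)).comp
        (e : (Fin n → F) →ₗ[F] (Fin n → F)) = LinearMap.id := by
      ext v; simp
    rw [this, LinearMap.toMatrix'_id]⟩

lemma glOfEquiv_mulVec (e : (Fin n → F) ≃ₗ[F] (Fin n → F)) (v : Fin n → F) :
    Matrix.mulVec (↑(glOfEquiv e) : Matrix (Fin n) (Fin n) F) v = e v := by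
  show Matrix.mulVec (LinearMap.toMatrix' (e : (Fin n → F) →ₗ[F] (Fin n → F))) v = e v
  rw [← Matrix.toLin'_apply, Matrix.toLin'_toMatrix']
  rfl

lemma exists_extension {j m : ℕ} (hj : j ≤ m) (hm : m ≤ n) (a : Fin j → Fin n → F)
    (ha : LinearIndependent F a) :
    ∃ a' : Fin m → Fin n → F, LinearIndependent F a' ∧
      ∀ i : Fin j, a' (Fin.castLE hj i) = a i := by
  revert hm
  induction m, hj using Nat.le_induction with
  | base =>
    intro _
    exact ⟨a, ha, fun i => by congr 1⟩
  | succ m hjm ih =>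
    intro hm
    obtain ⟨a', h1, h2⟩ := ih (by omega)
    have hspan : Submodule.span F (Set.range a') ≠ ⊤ := by
      intro htop
      have h3 : Module.finrank F (Submodule.span F (Set.range a')) = m := by
        rw [finrank_span_eq_card h1, Fintype.card_fin]
      rw [htop, finrank_top, Module.finrank_fintype_fun_eq_card, Fintype.card_fin] at h3
      omega
    obtain ⟨v, hv⟩ : ∃ v, v ∉ Submodule.span F (Set.range a') := by
      by_contra hcon
      push_neg at hcon
      exact hspan (Submodule.eq_top_iff'.2 hcon)
    refine ⟨Fin.snoc a' v, linearIndependent_fin_snoc.2 ⟨h1, hv⟩, fun i => ?_⟩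
    have : Fin.castLE (by omega : j ≤ m + 1) i = Fin.castSucc (Fin.castLE hjm i) := by
      ext; rfl
    rw [this, Fin.snoc_castSucc, h2]

lemma gl_transitive (hn : 0 < n) {j : ℕ} (hj : j ≤ n) (a b : Fin j → Fin n → F)
    (ha : LinearIndependent F a) (hb : LinearIndependent F b) :
    ∃ g : GL (Fin n) F, ∀ m, Matrix.mulVec (↑g : Matrix (Fin n) (Fin n) F) (a m) = b m := by
  obtain ⟨a', ha', ha2⟩ := exists_extension hj le_rfl a ha
  obtain ⟨b', hb', hb2⟩ := exists_extension hj le_rfl b hb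
  have : Nonempty (Fin n) := Fin.pos_iff_nonempty.1 hn
  have hcard : Fintype.card (Fin n) = Module.finrank F (Fin n → F) := by
    simp [Module.finrank_fintype_fun_eq_card]
  let Ba := basisOfLinearIndependentOfCardEqFinrank ha' hcard
  let Bb := basisOfLinearIndependentOfCardEqFinrank hb' hcard
  refine ⟨glOfEquiv (Ba.equiv Bb (Equiv.refl _)), fun m => ?_⟩
  rw [glOfEquiv_mulVec, ← ha2 m, ← hb2 m]
  have h1 : a' (Fin.castLE hj m) = Ba (Fin.castLE hj m) := by
    rw [coe_basisOfLinearIndependentOfCardEqFinrank]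
  rw [h1, Module.Basis.equiv_apply, Equiv.refl_apply, coe_basisOfLinearIndependentOfCardEqFinrank]

end GLfacts


section Core
variable {F : Type} [Field F] [Fintype F] [DecidableEq F] {n : ℕ}

/-- The set of linearly independent `j`-tuples. -/
noncomputable def Om (F : Type) [Field F] [Fintype F] (n j : ℕ) :
    Finset (Fin j → Fin n → F) :=
  letI := Classical.decPred (fun a : Fin j → Fin n → F => LinearIndependent F a)
  Finset.univ.filter (fun a => LinearIndependent F a)

lemma mem_Om {j : ℕ} {a : Fin j → Fin n → F} : a ∈ Om F n j ↔ LinearIndependent F a := by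
  classical
  simp [Om]

/-- The number of `g ∈ Y` with `g a = b`. -/
def Mc (Y : Finset (GL (Fin n) F)) {j : ℕ} (a b : Fin j → Fin n → F) : ℕ :=
  (Y.filter (fun g : GL (Fin n) F => ∀ m, Matrix.mulVec (↑g : Matrix (Fin n) (Fin n) F) (a m) = b m)).card

lemma natcard_subtype {α : Type*} [Fintype α] (s : Finset α) (p : α → Prop)
    [DecidablePred p] :
    Nat.card {x // x ∈ s ∧ p x} = (s.filter p).card := by
  classical
  rw [Nat.card_eq_fintype_card, Fintype.card_subtype]
  congr 1
  ext x
  simp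

lemma natcard_design (Y : Finset (GL (Fin n) F)) {j : ℕ} (a b : Fin j → Fin n → F) :
    Nat.card {g : GL (Fin n) F // g ∈ (↑Y : Set (GL (Fin n) F)) ∧
      ∀ m, Matrix.mulVec (↑g : Matrix (Fin n) (Fin n) F) (a m) = b m} = Mc Y a b := by
  classical
  rw [Nat.card_congr (Equiv.subtypeEquivRight (q := fun g => g ∈ Y ∧
      ∀ m, Matrix.mulVec (↑g : Matrix (Fin n) (Fin n) F) (a m) = b m)
      (by intro g; simp))]
  exact natcard_subtype Y _

lemma natcard_Om {j : ℕ} (p : (Fin j → Fin n → F) → Prop) [DecidablePred p] :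
    Nat.card {a : Fin j → Fin n → F // LinearIndependent F a ∧ p a}
      = ((Om F n j).filter p).card := by
  classical
  rw [Nat.card_congr (Equiv.subtypeEquivRight (q := fun a => a ∈ Om F n j ∧ p a)
      (by intro a; simp [mem_Om]))]
  exact natcard_subtype _ _

end Core

section Main
variable {F : Type} [Field F] [Fintype F] [DecidableEq F] {n : ℕ}

lemma prod_cast_sub (q d j : ℕ) (hq : 1 ≤ q) :
    ((∏ i ∈ Finset.range j, (q ^ d - q ^ i) : ℕ) : ℝ)
      = ∏ i ∈ Finset.range j, ((q : ℝ) ^ d - (q : ℝ) ^ i) := by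
  rcases le_or_gt j d with hj | hj
  · rw [Nat.cast_prod]
    refine Finset.prod_congr rfl fun i hi => ?_
    rw [Nat.cast_sub (Nat.pow_le_pow_right hq (by
      have := Finset.mem_range.1 hi; omega))]
    push_cast; ring
  · rw [Finset.prod_eq_zero (Finset.mem_range.2 hj) (by rw [Nat.sub_self]),
      Finset.prod_eq_zero (Finset.mem_range.2 hj) (by rw [sub_self])]
    simp

lemma kcount (Y : Finset (GL (Fin n) F)) (x y : GL (Fin n) F) (j : ℕ) :
    (((Om F n j).filter (fun a => ∀ m,
        Matrix.mulVec (↑x : Matrix (Fin n) (Fin n) F) (a m)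
          = Matrix.mulVec (↑y : Matrix (Fin n) (Fin n) F) (a m))).card : ℕ)
      = ∏ i ∈ Finset.range j, (Fintype.card F ^
          (n - Matrix.rank ((↑x : Matrix (Fin n) (Fin n) F) - (↑y : Matrix (Fin n) (Fin n) F))) - Fintype.card F ^ i) := by
  classical
  rw [← card_li_ker ((↑x : Matrix (Fin n) (Fin n) F) - (↑y : Matrix (Fin n) (Fin n) F)) j]
  rw [natcard_Om (p := fun a => ∀ m,
      ((↑x : Matrix (Fin n) (Fin n) F) - (↑y : Matrix (Fin n) (Fin n) F)).mulVec (a m) = 0)]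
  congr 1
  apply Finset.filter_congr
  intro a _
  simp only [Matrix.sub_mulVec, sub_eq_zero]

lemma rowsum {j : ℕ} (hj : j ≤ n) (Y : Finset (GL (Fin n) F))
    {a : Fin j → Fin n → F} (ha : a ∈ Om F n j) :
    ∑ b ∈ Om F n j, Mc Y a b = Y.card := by
  classical
  rw [Finset.card_eq_sum_card_fiberwise (f := fun g : GL (Fin n) F =>
      (fun m => Matrix.mulVec (↑g : Matrix (Fin n) (Fin n) F) (a m))) (t := Om F n j)
      (fun g _ => mem_Om.2 (linInd_mulVec g (mem_Om.1 ha)))]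
  refine Finset.sum_congr rfl fun b _ => ?_
  unfold Mc
  congr 1
  apply Finset.filter_congr
  intro g _
  simp [funext_iff]

lemma pairsumN {j : ℕ} (hj : j ≤ n) (Y : Finset (GL (Fin n) F)) :
    ∑ x ∈ Y, ∑ y ∈ Y, ∏ i ∈ Finset.range j,
        (Fintype.card F ^ (n - Matrix.rank ((↑x : Matrix (Fin n) (Fin n) F) - (↑y : Matrix (Fin n) (Fin n) F)))
          - Fintype.card F ^ i)
      = ∑ a ∈ Om F n j, ∑ b ∈ Om F n j, Mc Y a b * Mc Y a b := by
  classical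
  have key : ∀ a ∈ Om F n j,
      (∑ x ∈ Y, ∑ y ∈ Y, if (∀ m, Matrix.mulVec (↑x : Matrix (Fin n) (Fin n) F) (a m)
          = Matrix.mulVec (↑y : Matrix (Fin n) (Fin n) F) (a m)) then 1 else 0)
        = ∑ b ∈ Om F n j, Mc Y a b * Mc Y a b := by
    intro a ha
    have hmid : ∀ x : GL (Fin n) F,
        (∑ y ∈ Y, if (∀ m, Matrix.mulVec (↑x : Matrix (Fin n) (Fin n) F) (a m)
            = Matrix.mulVec (↑y : Matrix (Fin n) (Fin n) F) (a m)) then 1 else 0)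
          = Mc Y a (fun m => Matrix.mulVec (↑x : Matrix (Fin n) (Fin n) F) (a m)) := by
      intro x
      unfold Mc
      rw [Finset.card_filter]
      refine Finset.sum_congr rfl fun y _ => ?_
      exact if_congr (forall_congr' fun m => eq_comm) rfl rfl
    have hright : ∀ b ∈ Om F n j, Mc Y a b * Mc Y a b
        = ∑ x ∈ Y, if b = (fun m => Matrix.mulVec (↑x : Matrix (Fin n) (Fin n) F) (a m))
            then Mc Y a b else 0 := by
      intro b _
      have hcf : Mc Y a b = ∑ g ∈ Y, if (∀ m, Matrix.mulVec (↑g : Matrix (Fin n) (Fin n) F) (a m) = b m) then 1 else 0 :=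
        Finset.card_filter _ _
      nth_rewrite 1 [hcf]
      rw [Finset.sum_mul]
      refine Finset.sum_congr rfl fun x _ => ?_
      rw [ite_mul, one_mul, zero_mul]
      refine if_congr ?_ rfl rfl
      rw [funext_iff]
      exact ⟨fun h m => (h m).symm, fun h m => (h m).symm⟩
    have hL : (∑ x ∈ Y, ∑ y ∈ Y, if (∀ m, Matrix.mulVec (↑x : Matrix (Fin n) (Fin n) F) (a m)
          = Matrix.mulVec (↑y : Matrix (Fin n) (Fin n) F) (a m)) then 1 else 0)
        = ∑ x ∈ Y, Mc Y a (fun m => Matrix.mulVec (↑x : Matrix (Fin n) (Fin n) F) (a m)) :=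
      Finset.sum_congr rfl fun x _ => hmid x
    have hR : (∑ b ∈ Om F n j, Mc Y a b * Mc Y a b)
        = ∑ x ∈ Y, Mc Y a (fun m => Matrix.mulVec (↑x : Matrix (Fin n) (Fin n) F) (a m)) := by
      rw [Finset.sum_congr rfl hright, Finset.sum_comm]
      refine Finset.sum_congr rfl fun x _ => ?_
      rw [Finset.sum_ite_eq' (Om F n j)
        (fun m => Matrix.mulVec (↑x : Matrix (Fin n) (Fin n) F) (a m)) (fun b => Mc Y a b),
        if_pos (mem_Om.2 (linInd_mulVec x (mem_Om.1 ha)))]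
    rw [hL, hR]
  calc ∑ x ∈ Y, ∑ y ∈ Y, ∏ i ∈ Finset.range j,
        (Fintype.card F ^ (n - Matrix.rank ((↑x : Matrix (Fin n) (Fin n) F) - (↑y : Matrix (Fin n) (Fin n) F)))
          - Fintype.card F ^ i)
      = ∑ x ∈ Y, ∑ y ∈ Y, ∑ a ∈ Om F n j,
          if (∀ m, Matrix.mulVec (↑x : Matrix (Fin n) (Fin n) F) (a m)
            = Matrix.mulVec (↑y : Matrix (Fin n) (Fin n) F) (a m)) then 1 else 0 := by
        refine Finset.sum_congr rfl fun x _ => Finset.sum_congr rfl fun y _ => ?_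
        rw [← kcount Y x y j, Finset.card_filter]
    _ = ∑ a ∈ Om F n j, ∑ x ∈ Y, ∑ y ∈ Y,
          if (∀ m, Matrix.mulVec (↑x : Matrix (Fin n) (Fin n) F) (a m)
            = Matrix.mulVec (↑y : Matrix (Fin n) (Fin n) F) (a m)) then 1 else 0 := by
        rw [show (∑ x ∈ Y, ∑ y ∈ Y, ∑ a ∈ Om F n j,
            if (∀ m, Matrix.mulVec (↑x : Matrix (Fin n) (Fin n) F) (a m)
              = Matrix.mulVec (↑y : Matrix (Fin n) (Fin n) F) (a m)) then 1 else 0)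
            = ∑ x ∈ Y, ∑ a ∈ Om F n j, ∑ y ∈ Y,
            if (∀ m, Matrix.mulVec (↑x : Matrix (Fin n) (Fin n) F) (a m)
              = Matrix.mulVec (↑y : Matrix (Fin n) (Fin n) F) (a m)) then 1 else 0
          from Finset.sum_congr rfl fun x _ => Finset.sum_comm]
        exact Finset.sum_comm
    _ = ∑ a ∈ Om F n j, ∑ b ∈ Om F n j, Mc Y a b * Mc Y a b :=
        Finset.sum_congr rfl key

end Main

section Design
variable {F : Type} [Field F] [Fintype F] [DecidableEq F] {n : ℕ}

lemma mulVec_inv_mulVec (g : GL (Fin n) F) (v : Fin n → F) :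
    Matrix.mulVec (↑g⁻¹ : Matrix (Fin n) (Fin n) F)
      (Matrix.mulVec (↑g : Matrix (Fin n) (Fin n) F) v) = v := by
  rw [Matrix.mulVec_mulVec, ← Matrix.GeneralLinearGroup.coe_mul, inv_mul_cancel,
    Matrix.GeneralLinearGroup.coe_one, Matrix.one_mulVec]

lemma mulVec_mulVec_inv (g : GL (Fin n) F) (v : Fin n → F) :
    Matrix.mulVec (↑g : Matrix (Fin n) (Fin n) F)
      (Matrix.mulVec (↑g⁻¹ : Matrix (Fin n) (Fin n) F) v) = v := by
  rw [Matrix.mulVec_mulVec, ← Matrix.GeneralLinearGroup.coe_mul, mul_inv_cancel,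
    Matrix.GeneralLinearGroup.coe_one, Matrix.one_mulVec]

lemma design_reduce (hn : 0 < n) {t : ℕ} (htn : t ≤ n) (Y : Finset (GL (Fin n) F))
    (hdes : ∃ r, ∀ a b : Fin t → Fin n → F, LinearIndependent F a →
      LinearIndependent F b → Mc Y a b = r)
    {j : ℕ} (hjt : j ≤ t) :
    ∃ r, ∀ a b : Fin j → Fin n → F, LinearIndependent F a →
      LinearIndependent F b → Mc Y a b = r := by
  classical
  obtain ⟨r, hr⟩ := hdes
  set E : (Fin j → Fin n → F) → Finset (Fin t → Fin n → F) := fun b =>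
    (Om F n t).filter (fun c => ∀ i : Fin j, c (Fin.castLE hjt i) = b i) with hE
  have claim1 : ∀ a b : Fin j → Fin n → F, LinearIndependent F a →
      LinearIndependent F b → Mc Y a b = r * (E b).card := by
    intro a b ha hb
    obtain ⟨a', ha', ha2⟩ := exists_extension hjt htn a ha
    have hfib : (Y.filter (fun g : GL (Fin n) F =>
        ∀ m, Matrix.mulVec (↑g : Matrix (Fin n) (Fin n) F) (a m) = b m)).card
        = ∑ c ∈ E b, ((Y.filter (fun g : GL (Fin n) F =>
            ∀ m, Matrix.mulVec (↑g : Matrix (Fin n) (Fin n) F) (a m) = b m)).filter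
            (fun g : GL (Fin n) F => (fun m => Matrix.mulVec (↑g : Matrix (Fin n) (Fin n) F) (a' m)) = c)).card := by
      apply Finset.card_eq_sum_card_fiberwise
      intro g hg
      rw [Finset.mem_coe, Finset.mem_filter] at hg
      rw [Finset.mem_coe, hE, Finset.mem_filter]
      refine ⟨mem_Om.2 (linInd_mulVec g ha'), fun i => ?_⟩
      show Matrix.mulVec (↑g : Matrix (Fin n) (Fin n) F) (a' (Fin.castLE hjt i)) = b i
      rw [ha2 i]
      exact hg.2 i
    have hfib2 : ∀ c ∈ E b, ((Y.filter (fun g : GL (Fin n) F =>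
        ∀ m, Matrix.mulVec (↑g : Matrix (Fin n) (Fin n) F) (a m) = b m)).filter
        (fun g : GL (Fin n) F => (fun m => Matrix.mulVec (↑g : Matrix (Fin n) (Fin n) F) (a' m)) = c)).card
        = Mc Y a' c := by
      intro c hc
      rw [hE, Finset.mem_filter] at hc
      unfold Mc
      congr 1
      rw [Finset.filter_filter]
      apply Finset.filter_congr
      intro g hg
      rw [funext_iff]
      constructor
      · exact fun h => h.2
      · intro h
        refine ⟨fun m => ?_, h⟩
        rw [← ha2 m, h (Fin.castLE hjt m), hc.2 m]
    have : Mc Y a b = ∑ c ∈ E b, Mc Y a' c := by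
      unfold Mc; rw [hfib]; exact Finset.sum_congr rfl hfib2
    rw [this, Finset.sum_congr rfl (fun c hc => hr a' c ha'
      (mem_Om.1 (Finset.mem_filter.1 (hE ▸ hc)).1)), Finset.sum_const, smul_eq_mul, mul_comm]
  have claim2 : ∀ b b' : Fin j → Fin n → F, LinearIndependent F b →
      LinearIndependent F b' → (E b).card = (E b').card := by
    intro b b' hb hb'
    obtain ⟨g, hg⟩ := gl_transitive hn (le_trans hjt htn) b b' hb hb'
    apply Finset.card_bij' (i := fun c _ => fun m => Matrix.mulVec (↑g : Matrix (Fin n) (Fin n) F) (c m))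
      (j := fun c _ => fun m => Matrix.mulVec (↑g⁻¹ : Matrix (Fin n) (Fin n) F) (c m))
    · intro c hc
      rw [hE, Finset.mem_filter] at hc ⊢
      refine ⟨mem_Om.2 (linInd_mulVec g (mem_Om.1 hc.1)), fun i => ?_⟩
      show Matrix.mulVec (↑g : Matrix (Fin n) (Fin n) F) (c (Fin.castLE hjt i)) = b' i
      rw [hc.2 i, hg i]
    · intro c hc
      rw [hE, Finset.mem_filter] at hc ⊢
      refine ⟨mem_Om.2 (linInd_mulVec g⁻¹ (mem_Om.1 hc.1)), fun i => ?_⟩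
      show Matrix.mulVec (↑g⁻¹ : Matrix (Fin n) (Fin n) F) (c (Fin.castLE hjt i)) = b i
      rw [hc.2 i, ← hg i, mulVec_inv_mulVec]
    · intro c _
      funext m
      exact mulVec_inv_mulVec g (c m)
    · intro c _
      funext m
      exact mulVec_mulVec_inv g (c m)
  have hone : LinearIndependent F (fun i : Fin j =>
      (Pi.basisFun F (Fin n)) (Fin.castLE (le_trans hjt htn) i)) :=
    (Pi.basisFun F (Fin n)).linearIndependent.comp _ (Fin.castLE_injective _)
  refine ⟨r * (E (fun i => (Pi.basisFun F (Fin n)) (Fin.castLE (le_trans hjt htn) i))).card,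
    fun a b ha hb => ?_⟩
  rw [claim1 a b ha hb, claim2 b _ hb hone]

end Design

lemma gauss2 (q : ℕ) {k : ℕ} (hk : 1 ≤ k) :
    ∑ j ∈ Finset.range (k+1),
      (-1:ℝ)^(k-j) * (q:ℝ)^(Nat.choose (k-j) 2) * (qBinom q k j : ℝ) = 0 := by
  have h1 : ∀ j ∈ Finset.range (k+1),
      (-1:ℝ)^(k-j) * (q:ℝ)^(Nat.choose (k-j) 2) * (qBinom q k j : ℝ)
        = (-1:ℝ)^(k-j) * (q:ℝ)^(Nat.choose (k-j) 2) * (gb q k j : ℝ) := by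
    intro j hj
    rw [qBinom_eq_gb q (by have := Finset.mem_range.1 hj; omega)]
  rw [Finset.sum_congr rfl h1, ← Finset.sum_range_reflect]
  rw [← gauss q hk]
  refine Finset.sum_congr rfl fun j hj => ?_
  have hjk : j ≤ k := by have := Finset.mem_range.1 hj; omega
  have h2 : k + 1 - 1 - j = k - j := by omega
  have h3 : k - (k - j) = j := by omega
  rw [h2, h3, gb_symm q hjk]

/-- A nonempty `Y ⊆ GL(n,q)` is a `t`-design iff its dual distance distribution
`A'_k = (1/|Y|) Σ_{x,y ∈ Y} U_k(q^{n − rank(x−y)})` vanishes for `1 ≤ k ≤ t`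
(the converse direction requiring `t ≤ n/2`). -/
theorem statement12 (q : ℕ) (hq : IsPrimePow q) (F : Type) [Field F] [Fintype F]
    [DecidableEq F] (hF : Fintype.card F = q) (n t : ℕ) (ht1 : 1 ≤ t) (ht2 : t ≤ n)
    (Y : Finset (GL (Fin n) F)) (hYne : Y.Nonempty)
    (A' : ℕ → ℝ)
    (hA' : ∀ k, A' k = (1 / (Y.card : ℝ)) * ∑ x ∈ Y, ∑ y ∈ Y,
      ascU q k ((q : ℝ) ^
        (n - Matrix.rank ((x : Matrix (Fin n) (Fin n) F) - (y : Matrix (Fin n) (Fin n) F))))) :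
    (IsTDesignGL F n t ↑Y → ∀ k, 1 ≤ k → k ≤ t → A' k = 0) ∧
    (2 * t ≤ n → (∀ k, 1 ≤ k → k ≤ t → A' k = 0) → IsTDesignGL F n t ↑Y) := by
  classical
  subst hF
  have hn : 0 < n := lt_of_lt_of_le ht1 ht2
  set cF := Fintype.card F with hcF
  have hY0 : (Y.card : ℝ) ≠ 0 := by
    have := Finset.card_pos.2 hYne
    positivity
  set N : ℕ → ℕ := fun j => (Om F n j).card with hN
  set S : ℕ → ℝ := fun j => ∑ a ∈ Om F n j, ∑ b ∈ Om F n j,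
    ((Mc Y a b : ℝ) - (Y.card : ℝ) / (N j : ℝ))^2 with hS
  have hOmNe : ∀ j, j ≤ n → (Om F n j).Nonempty := by
    intro j hj
    exact ⟨fun i => Pi.basisFun F (Fin n) (Fin.castLE hj i),
      mem_Om.2 ((Pi.basisFun F (Fin n)).linearIndependent.comp _ (Fin.castLE_injective _))⟩
  have hNpos : ∀ j, j ≤ n → (0:ℝ) < (N j : ℝ) := by
    intro j hj
    exact_mod_cast Finset.card_pos.2 (hOmNe j hj)
  have hrowR : ∀ j, j ≤ n → ∀ a ∈ Om F n j,
      ∑ b ∈ Om F n j, (Mc Y a b : ℝ) = (Y.card : ℝ) := by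
    intro j hj a ha
    exact_mod_cast congrArg (Nat.cast (R := ℝ)) (rowsum hj Y ha)
  -- variance identity
  have hsq : ∀ j, j ≤ n →
      ∑ a ∈ Om F n j, ∑ b ∈ Om F n j, (Mc Y a b : ℝ)^2 = S j + (Y.card : ℝ)^2 := by
    intro j hj
    set μ : ℝ := (Y.card : ℝ) / (N j : ℝ) with hμ
    have hμN : (N j : ℝ) * μ = (Y.card : ℝ) := by
      rw [hμ]
      field_simp
      exact div_self (ne_of_gt (hNpos j hj))
    have inner : ∀ a ∈ Om F n j,
        ∑ b ∈ Om F n j, ((Mc Y a b : ℝ) - μ)^2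
          = (∑ b ∈ Om F n j, (Mc Y a b : ℝ)^2) - 2*μ*(Y.card : ℝ) + (N j : ℝ)*μ^2 := by
      intro a ha
      calc ∑ b ∈ Om F n j, ((Mc Y a b : ℝ) - μ)^2
          = ∑ b ∈ Om F n j, ((Mc Y a b : ℝ)^2 - 2*μ*(Mc Y a b : ℝ) + μ^2) :=
            Finset.sum_congr rfl fun b _ => by ring
        _ = (∑ b ∈ Om F n j, (Mc Y a b : ℝ)^2) - (∑ b ∈ Om F n j, 2*μ*(Mc Y a b : ℝ))
              + (N j : ℝ)*μ^2 := by
            rw [Finset.sum_add_distrib, Finset.sum_sub_distrib, Finset.sum_const,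
              nsmul_eq_mul]
        _ = (∑ b ∈ Om F n j, (Mc Y a b : ℝ)^2) - 2*μ*(Y.card : ℝ) + (N j : ℝ)*μ^2 := by
            rw [← Finset.mul_sum, hrowR j hj a ha]
    have houter : S j = (∑ a ∈ Om F n j, ∑ b ∈ Om F n j, (Mc Y a b : ℝ)^2)
        - (N j : ℝ)*(2*μ*(Y.card : ℝ)) + (N j : ℝ)*((N j : ℝ)*μ^2) := by
      rw [hS]
      simp only
      rw [Finset.sum_congr rfl inner, Finset.sum_add_distrib, Finset.sum_sub_distrib,
        Finset.sum_const, Finset.sum_const, nsmul_eq_mul, nsmul_eq_mul]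
    have hNne : (N j : ℝ) ≠ 0 := ne_of_gt (hNpos j hj)
    have : S j = (∑ a ∈ Om F n j, ∑ b ∈ Om F n j, (Mc Y a b : ℝ)^2) - (Y.card : ℝ)^2 := by
      rw [houter, hμ]
      field_simp
      ring
    linarith [this]
  -- pair sum, real version
  have hpairR : ∀ j, j ≤ n →
      ∑ x ∈ Y, ∑ y ∈ Y, ∏ i ∈ Finset.range j,
        ((cF : ℝ) ^ (n - Matrix.rank ((↑x : Matrix (Fin n) (Fin n) F)
            - (↑y : Matrix (Fin n) (Fin n) F))) - (cF : ℝ) ^ i)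
        = S j + (Y.card : ℝ)^2 := by
    intro j hj
    have hcast : ∑ x ∈ Y, ∑ y ∈ Y, ∏ i ∈ Finset.range j,
        ((cF : ℝ) ^ (n - Matrix.rank ((↑x : Matrix (Fin n) (Fin n) F)
            - (↑y : Matrix (Fin n) (Fin n) F))) - (cF : ℝ) ^ i)
        = ((∑ x ∈ Y, ∑ y ∈ Y, ∏ i ∈ Finset.range j,
            (cF ^ (n - Matrix.rank ((↑x : Matrix (Fin n) (Fin n) F)
              - (↑y : Matrix (Fin n) (Fin n) F))) - cF ^ i) : ℕ) : ℝ) := by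
      rw [Nat.cast_sum]
      refine Finset.sum_congr rfl fun x _ => ?_
      rw [Nat.cast_sum]
      refine Finset.sum_congr rfl fun y _ => ?_
      exact (prod_cast_sub cF _ j Fintype.card_pos).symm
    have hcast2 : ((∑ a ∈ Om F n j, ∑ b ∈ Om F n j, Mc Y a b * Mc Y a b : ℕ) : ℝ)
        = ∑ a ∈ Om F n j, ∑ b ∈ Om F n j, (Mc Y a b : ℝ)^2 := by
      rw [Nat.cast_sum]
      refine Finset.sum_congr rfl fun a _ => ?_
      rw [Nat.cast_sum]
      refine Finset.sum_congr rfl fun b _ => ?_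
      push_cast
      ring
    rw [hcast, pairsumN hj Y, hcast2, hsq j hj]
  -- A' formula
  have hAform : ∀ k, 1 ≤ k → k ≤ t → A' k = (1/(Y.card : ℝ)) *
      ∑ j ∈ Finset.range (k+1),
        ((-1:ℝ)^(k-j) * (cF : ℝ)^(Nat.choose (k-j) 2) * (qBinom cF k j : ℝ)) * S j := by
    intro k hk1 hkt
    rw [hA' k]
    congr 1
    unfold ascU
    calc ∑ x ∈ Y, ∑ y ∈ Y, ∑ j ∈ Finset.range (k+1),
          (-1:ℝ)^(k-j) * (cF : ℝ)^(Nat.choose (k-j) 2) * (qBinom cF k j : ℝ) *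
            ∏ i ∈ Finset.range j,
              ((cF : ℝ) ^ (n - Matrix.rank ((↑x : Matrix (Fin n) (Fin n) F)
                - (↑y : Matrix (Fin n) (Fin n) F))) - (cF : ℝ) ^ i)
        = ∑ j ∈ Finset.range (k+1), ∑ x ∈ Y, ∑ y ∈ Y,
            (-1:ℝ)^(k-j) * (cF : ℝ)^(Nat.choose (k-j) 2) * (qBinom cF k j : ℝ) *
            ∏ i ∈ Finset.range j,
              ((cF : ℝ) ^ (n - Matrix.rank ((↑x : Matrix (Fin n) (Fin n) F)
                - (↑y : Matrix (Fin n) (Fin n) F))) - (cF : ℝ) ^ i) := by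
          rw [show (∑ x ∈ Y, ∑ y ∈ Y, ∑ j ∈ Finset.range (k+1),
            (-1:ℝ)^(k-j) * (cF : ℝ)^(Nat.choose (k-j) 2) * (qBinom cF k j : ℝ) *
            ∏ i ∈ Finset.range j,
              ((cF : ℝ) ^ (n - Matrix.rank ((↑x : Matrix (Fin n) (Fin n) F)
                - (↑y : Matrix (Fin n) (Fin n) F))) - (cF : ℝ) ^ i))
            = ∑ x ∈ Y, ∑ j ∈ Finset.range (k+1), ∑ y ∈ Y,
            (-1:ℝ)^(k-j) * (cF : ℝ)^(Nat.choose (k-j) 2) * (qBinom cF k j : ℝ) *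
            ∏ i ∈ Finset.range j,
              ((cF : ℝ) ^ (n - Matrix.rank ((↑x : Matrix (Fin n) (Fin n) F)
                - (↑y : Matrix (Fin n) (Fin n) F))) - (cF : ℝ) ^ i)
            from Finset.sum_congr rfl fun x _ => Finset.sum_comm]
          exact Finset.sum_comm
      _ = ∑ j ∈ Finset.range (k+1),
            ((-1:ℝ)^(k-j) * (cF : ℝ)^(Nat.choose (k-j) 2) * (qBinom cF k j : ℝ)) *
              (S j + (Y.card : ℝ)^2) := by
          refine Finset.sum_congr rfl fun j hj => ?_
          have hjn : j ≤ n := by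
            have := Finset.mem_range.1 hj; omega
          rw [← hpairR j hjn, Finset.mul_sum]
          refine Finset.sum_congr rfl fun x _ => ?_
          rw [Finset.mul_sum]
      _ = (∑ j ∈ Finset.range (k+1),
            ((-1:ℝ)^(k-j) * (cF : ℝ)^(Nat.choose (k-j) 2) * (qBinom cF k j : ℝ)) * S j)
          + (∑ j ∈ Finset.range (k+1),
            ((-1:ℝ)^(k-j) * (cF : ℝ)^(Nat.choose (k-j) 2) * (qBinom cF k j : ℝ)))
              * (Y.card : ℝ)^2 := by
          rw [Finset.sum_mul, ← Finset.sum_add_distrib]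
          exact Finset.sum_congr rfl fun j _ => by ring
      _ = ∑ j ∈ Finset.range (k+1),
            ((-1:ℝ)^(k-j) * (cF : ℝ)^(Nat.choose (k-j) 2) * (qBinom cF k j : ℝ)) * S j := by
          rw [gauss2 cF hk1, zero_mul, add_zero]
  -- bridge between design constancy and S
  have hSzero_of_const : ∀ j, j ≤ n →
      (∃ r, ∀ a b : Fin j → Fin n → F, LinearIndependent F a →
        LinearIndependent F b → Mc Y a b = r) → S j = 0 := by
    intro j hj ⟨r, hr⟩
    obtain ⟨a0, ha0⟩ := hOmNe j hj
    have hNr : ((N j : ℝ)) * (r : ℝ) = (Y.card : ℝ) := by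
      have h1 : ∑ b ∈ Om F n j, Mc Y a0 b = N j * r := by
        rw [Finset.sum_congr rfl (fun b hb => hr a0 b (mem_Om.1 ha0) (mem_Om.1 hb)),
          Finset.sum_const, smul_eq_mul]
      have h2 := rowsum hj Y ha0
      rw [h1] at h2
      exact_mod_cast congrArg (Nat.cast (R := ℝ)) h2
    have hNne : (N j : ℝ) ≠ 0 := ne_of_gt (hNpos j hj)
    have hrμ : (r : ℝ) = (Y.card : ℝ) / (N j : ℝ) := by
      field_simp
      linarith [hNr]
    rw [hS]
    simp only
    refine Finset.sum_eq_zero fun a ha => Finset.sum_eq_zero fun b hb => ?_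
    rw [hr a b (mem_Om.1 ha) (mem_Om.1 hb), ← hrμ, sub_self]
    ring
  constructor
  · -- forward
    intro hdes k hk1 hkt
    obtain ⟨r, hr⟩ := hdes
    have hdesM : ∃ r, ∀ a b : Fin t → Fin n → F, LinearIndependent F a →
        LinearIndependent F b → Mc Y a b = r :=
      ⟨r, fun a b ha hb => by rw [← natcard_design Y a b]; exact hr a b ha hb⟩
    rw [hAform k hk1 hkt]
    rw [Finset.sum_eq_zero, mul_zero]
    intro j hj
    have hjt : j ≤ t := by have := Finset.mem_range.1 hj; omega
    rw [hSzero_of_const j (le_trans hjt ht2) (design_reduce hn ht2 Y hdesM hjt), mul_zero]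
  · -- converse
    intro _ hAz
    have hS0 : S 0 = 0 := by
      apply hSzero_of_const 0 (Nat.zero_le n)
      refine ⟨Y.card, fun a b _ _ => ?_⟩
      unfold Mc
      congr 1
      apply Finset.filter_true_of_mem
      intro g _
      exact fun m => m.elim0
    have hSall : ∀ k, k ≤ t → S k = 0 := by
      intro k
      induction k using Nat.strong_induction_on with
      | _ k ih =>
        intro hkt
        match k, hkt with
        | 0, _ => exact hS0
        | k+1, hkt =>
          have hA0 := hAz (k+1) (by omega) hkt
          rw [hAform (k+1) (by omega) hkt] at hA0
          have hsum0 : ∑ j ∈ Finset.range (k+2),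
              ((-1:ℝ)^((k+1)-j) * (cF : ℝ)^(Nat.choose ((k+1)-j) 2)
                * (qBinom cF (k+1) j : ℝ)) * S j = 0 := by
            rcases mul_eq_zero.1 hA0 with h | h
            · exact absurd h (by positivity)
            · exact h
          rw [Finset.sum_range_succ] at hsum0
          have hrest : ∑ j ∈ Finset.range (k+1),
              ((-1:ℝ)^((k+1)-j) * (cF : ℝ)^(Nat.choose ((k+1)-j) 2)
                * (qBinom cF (k+1) j : ℝ)) * S j = 0 := by
            refine Finset.sum_eq_zero fun j hj => ?_
            have hjk : j < k + 1 := Finset.mem_range.1 hj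
            rw [ih j hjk (by omega), mul_zero]
          have hcoef : ((-1:ℝ)^((k+1)-(k+1)) * (cF : ℝ)^(Nat.choose ((k+1)-(k+1)) 2)
              * (qBinom cF (k+1) (k+1) : ℝ)) = 1 := by
            rw [Nat.sub_self, qBinom_eq_gb cF (le_refl (k+1)), gb_self]
            norm_num
          rw [hrest, hcoef, zero_add, one_mul] at hsum0
          exact hsum0
    have hSt := hSall t le_rfl
    have hconst : ∀ a ∈ Om F n t, ∀ b ∈ Om F n t,
        (Mc Y a b : ℝ) = (Y.card : ℝ) / (N t : ℝ) := by
      intro a ha b hb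
      have h1 : ∀ a' ∈ Om F n t, (0:ℝ) ≤ ∑ b' ∈ Om F n t,
          ((Mc Y a' b' : ℝ) - (Y.card : ℝ) / (N t : ℝ))^2 :=
        fun a' _ => Finset.sum_nonneg fun b' _ => sq_nonneg _
      have h2 := (Finset.sum_eq_zero_iff_of_nonneg h1).1 hSt a ha
      have h3 := (Finset.sum_eq_zero_iff_of_nonneg
        (fun b' _ => sq_nonneg ((Mc Y a b' : ℝ) - (Y.card : ℝ) / (N t : ℝ)))).1 h2 b hb
      have h4 := pow_eq_zero_iff (n := 2) (by norm_num) |>.1 h3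
      linarith [h4]
    obtain ⟨a0, ha0⟩ := hOmNe t ht2
    refine ⟨Mc Y a0 a0, fun a b ha hb => ?_⟩
    rw [natcard_design]
    have h1 := hconst a (mem_Om.2 ha) b (mem_Om.2 hb)
    have h2 := hconst a0 ha0 a0 ha0
    exact_mod_cast h1.trans h2.symm
end

section
/- Let q be a prime power, let n be a positive integer, and let Y be a subset of GL(n,q) with |Y| ≥ 2. Let d be the largest integer in {1,…,n} such that Y is a d-code and let t be the largest integer in {0,…,n} such that Y is a t-design (every such Y is a 1-code, and every subset is trivially a 0-design). Then ∏_{i=0}^{t−1}(q^n − q^i) ≤ |Y| ≤ ∏_{i=0}^{n−d}(q^n − q^i). Moreover, equality holds in one of these two bounds if and only if it holds in the other, and this happens if and only if d = n − t + 1. -/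
/-- A subset `Y` of `GL(n,q)` is a `d`-code if `rank(x − y) ≥ d` for all distinct `x, y ∈ Y`. -/
def IsDCodeGL (F : Type) [Field F] [Fintype F] (n d : ℕ) (Y : Set (GL (Fin n) F)) : Prop :=
  ∀ x ∈ Y, ∀ y ∈ Y, x ≠ y →
    d ≤ Matrix.rank ((x : Matrix (Fin n) (Fin n) F) - (y : Matrix (Fin n) (Fin n) F))

open Matrix Module

section helpers
variable {F : Type} [Field F] [Fintype F] {n : ℕ}
set_option linter.unusedSectionVars false

lemma count_LI {k : ℕ} (hk : k ≤ n) :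
    Nat.card {s : Fin k → (Fin n → F) // LinearIndependent F s} =
      ∏ i ∈ Finset.range k, (Fintype.card F ^ n - Fintype.card F ^ i) := by
  rw [card_linearIndependent (by simp [Module.finrank_fin_fun]; exact hk)]
  rw [show finrank F (Fin n → F) = n from Module.finrank_fin_fun F]
  exact (Finset.prod_range fun i => (Fintype.card F ^ n - Fintype.card F ^ i)).symm

lemma gl_smul_li (g : GL (Fin n) F) {k : ℕ} {v : Fin k → (Fin n → F)}
    (hv : LinearIndependent F v) :
    LinearIndependent F (fun m => Matrix.mulVec (g : Matrix (Fin n) (Fin n) F) (v m)) := by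
  have hker : LinearMap.ker (Matrix.mulVecLin (g : Matrix (Fin n) (Fin n) F)) = ⊥ := by
    rw [LinearMap.ker_eq_bot]
    intro u w h
    simp only [Matrix.mulVecLin_apply] at h
    have h3 := congrArg (Matrix.mulVec ((g⁻¹ : GL (Fin n) F) : Matrix (Fin n) (Fin n) F)) h
    have h2 : ((g⁻¹ : GL (Fin n) F) : Matrix (Fin n) (Fin n) F) * (g : Matrix (Fin n) (Fin n) F) = 1 := Units.inv_mul g
    rwa [Matrix.mulVec_mulVec, Matrix.mulVec_mulVec, h2, Matrix.one_mulVec, Matrix.one_mulVec] at h3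
  exact hv.map' _ hker

lemma li_ker_card_le {k : ℕ} (M : Matrix (Fin n) (Fin n) F)
    {a : Fin k → (Fin n → F)} (ha : LinearIndependent F a)
    (h0 : ∀ m, M.mulVec (a m) = 0) : k + M.rank ≤ n := by
  have hmem : ∀ m, a m ∈ LinearMap.ker M.mulVecLin := by
    intro m; simp [LinearMap.mem_ker, Matrix.mulVecLin_apply, h0 m]
  set a' : Fin k → LinearMap.ker M.mulVecLin := fun m => ⟨a m, hmem m⟩ with ha'
  have hli : LinearIndependent F a' := by
    apply LinearIndependent.of_comp (LinearMap.ker M.mulVecLin).subtype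
    exact ha
  have hk : k ≤ finrank F (LinearMap.ker M.mulVecLin) := by
    simpa using hli.fintype_card_le_finrank
  have hrn : M.rank + finrank F (LinearMap.ker M.mulVecLin) = n := by
    have := LinearMap.finrank_range_add_finrank_ker M.mulVecLin
    rwa [Module.finrank_fin_fun] at this
  omega

lemma exists_li_ker {k : ℕ} (M : Matrix (Fin n) (Fin n) F) (h : M.rank + k ≤ n) :
    ∃ a : Fin k → (Fin n → F), LinearIndependent F a ∧ ∀ m, M.mulVec (a m) = 0 := by
  have hrn : M.rank + finrank F (LinearMap.ker M.mulVecLin) = n := by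
    have := LinearMap.finrank_range_add_finrank_ker M.mulVecLin
    rwa [Module.finrank_fin_fun] at this
  have hk : k ≤ finrank F (LinearMap.ker M.mulVecLin) := by omega
  set W := LinearMap.ker M.mulVecLin
  let B := Module.finBasis F W
  refine ⟨fun m => (B (Fin.castLE hk m) : Fin n → F), ?_, ?_⟩
  · have h1 : LinearIndependent F (fun i : Fin (finrank F W) => (B i : Fin n → F)) := by
      have := B.linearIndependent.map' W.subtype (Submodule.ker_subtype W)
      exact this
    have := h1.comp (Fin.castLE hk) (Fin.castLE_injective hk)
    exact this
  · intro m
    have h2 := LinearMap.mem_ker.mp (B (Fin.castLE hk m)).2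
    rw [← Matrix.mulVecLin_apply]
    exact h2

lemma exists_li_tuple (k : ℕ) (hk : k ≤ n) :
    ∃ a : Fin k → (Fin n → F), LinearIndependent F a := by
  refine ⟨fun m => Pi.basisFun F (Fin n) (Fin.castLE hk m), ?_⟩
  have := (Pi.basisFun F (Fin n)).linearIndependent.comp (Fin.castLE hk) (Fin.castLE_injective hk)
  simpa [Function.comp_def, Pi.basisFun_apply] using this

end helpers

section main
variable {F : Type} [Field F] [Fintype F] {n : ℕ}
set_option linter.unusedSectionVars false

lemma design_count {t : ℕ} {Y : Finset (GL (Fin n) F)} {r : ℕ}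
    (a₀ : Fin t → (Fin n → F)) (ha₀ : LinearIndependent F a₀)
    (hr : ∀ a b : Fin t → (Fin n → F), LinearIndependent F a → LinearIndependent F b →
      Nat.card {g : GL (Fin n) F // g ∈ (↑Y : Set (GL (Fin n) F)) ∧
        ∀ m, Matrix.mulVec (g : Matrix (Fin n) (Fin n) F) (a m) = b m} = r) :
    Y.card = Nat.card {s : Fin t → (Fin n → F) // LinearIndependent F s} * r := by
  classical
  have E : {g : GL (Fin n) F // g ∈ Y} ≃
      Σ b : {s : Fin t → (Fin n → F) // LinearIndependent F s},
        {g : GL (Fin n) F // g ∈ (↑Y : Set (GL (Fin n) F)) ∧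
          ∀ m, Matrix.mulVec (g : Matrix (Fin n) (Fin n) F) (a₀ m) = b.1 m} := by
    refine ⟨fun g => ⟨⟨fun m => Matrix.mulVec (g.1 : Matrix (Fin n) (Fin n) F) (a₀ m),
        gl_smul_li g.1 ha₀⟩, ⟨g.1, by simpa using g.2, fun m => rfl⟩⟩,
      fun p => ⟨p.2.1, by simpa using p.2.2.1⟩, fun g => rfl, ?_⟩
    rintro ⟨⟨b, hb⟩, ⟨g, hg, hgb⟩⟩
    have hbe : b = fun m => Matrix.mulVec ((g : GL (Fin n) F) : Matrix (Fin n) (Fin n) F) (a₀ m) :=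
      funext fun m => (hgb m).symm
    subst hbe
    rfl
  have h1 : Nat.card {g : GL (Fin n) F // g ∈ Y} = Y.card := Nat.card_eq_finsetCard Y
  rw [← h1, Nat.card_congr E, Nat.card_eq_fintype_card, Fintype.card_sigma]
  have h2 : ∀ b : {s : Fin t → (Fin n → F) // LinearIndependent F s},
      Fintype.card {g : GL (Fin n) F // g ∈ (↑Y : Set (GL (Fin n) F)) ∧
        ∀ m, Matrix.mulVec (g : Matrix (Fin n) (Fin n) F) (a₀ m) = b.1 m} = r := by
    intro b
    rw [← Nat.card_eq_fintype_card]
    exact hr a₀ b.1 ha₀ b.2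
  rw [Finset.sum_congr rfl (fun b _ => h2 b), Finset.sum_const, Finset.card_univ,
    smul_eq_mul, Nat.card_eq_fintype_card]

lemma code_inj {d : ℕ} {Y : Finset (GL (Fin n) F)} (hd1 : 1 ≤ d) (hdn : d ≤ n)
    (hdcode : IsDCodeGL F n d ↑Y) {k : ℕ} (hk : n - d + 1 ≤ k)
    (a₀ : Fin k → (Fin n → F)) (ha₀ : LinearIndependent F a₀) :
    Function.Injective (fun g : {g : GL (Fin n) F // g ∈ Y} =>
      (⟨fun m => Matrix.mulVec ((g.1 : GL (Fin n) F) : Matrix (Fin n) (Fin n) F) (a₀ m),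
        gl_smul_li g.1 ha₀⟩ :
        {s : Fin k → (Fin n → F) // LinearIndependent F s})) := by
  intro x y h
  by_contra hxy
  have hxy' : x.1 ≠ y.1 := fun h' => hxy (Subtype.ext h')
  have hrk := hdcode x.1 (by simpa using x.2) y.1 (by simpa using y.2) hxy'
  have h0 : ∀ m, Matrix.mulVec ((x.1 : Matrix (Fin n) (Fin n) F) -
      (y.1 : Matrix (Fin n) (Fin n) F)) (a₀ m) = 0 := by
    intro m
    have hm := congrFun (congrArg Subtype.val h) m
    simp only at hm
    rw [Matrix.sub_mulVec, sub_eq_zero]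
    exact hm
  have := li_ker_card_le _ ha₀ h0
  omega

lemma sharp_design_code {t : ℕ} {Y : Finset (GL (Fin n) F)} (htn : t ≤ n)
    (hr : ∀ a b : Fin t → (Fin n → F), LinearIndependent F a → LinearIndependent F b →
      Nat.card {g : GL (Fin n) F // g ∈ (↑Y : Set (GL (Fin n) F)) ∧
        ∀ m, Matrix.mulVec (g : Matrix (Fin n) (Fin n) F) (a m) = b m} = 1) :
    IsDCodeGL F n (n - t + 1) ↑Y := by
  intro x hx y hy hxy
  by_contra hlt
  push_neg at hlt
  have hrk : ((x : Matrix (Fin n) (Fin n) F) - (y : Matrix (Fin n) (Fin n) F)).rank + t ≤ n := by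
    have hle := Matrix.rank_le_card_height ((x : Matrix (Fin n) (Fin n) F) -
      (y : Matrix (Fin n) (Fin n) F))
    simp only [Fintype.card_fin] at hle
    omega
  obtain ⟨a, ha, h0⟩ := exists_li_ker _ hrk
  have hb : LinearIndependent F (fun m => Matrix.mulVec ((x : GL (Fin n) F) :
      Matrix (Fin n) (Fin n) F) (a m)) := gl_smul_li x ha
  have h1 := hr a _ ha hb
  rw [Nat.card_eq_one_iff_unique] at h1
  have hymem : ∀ m, Matrix.mulVec ((y : GL (Fin n) F) : Matrix (Fin n) (Fin n) F) (a m) =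
      Matrix.mulVec ((x : GL (Fin n) F) : Matrix (Fin n) (Fin n) F) (a m) := by
    intro m
    have hm := h0 m
    rw [Matrix.sub_mulVec, sub_eq_zero] at hm
    exact hm.symm
  have heq := h1.1.allEq (⟨x, hx, fun m => rfl⟩ : {g : GL (Fin n) F //
      g ∈ (↑Y : Set (GL (Fin n) F)) ∧ ∀ m, Matrix.mulVec ((g : GL (Fin n) F) :
        Matrix (Fin n) (Fin n) F) (a m) = Matrix.mulVec ((x : GL (Fin n) F) :
        Matrix (Fin n) (Fin n) F) (a m)}) ⟨y, hy, hymem⟩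
  exact hxy (congrArg Subtype.val heq)

end main

section main2
variable {F : Type} [Field F] [Fintype F] {n : ℕ}
set_option linter.unusedSectionVars false

lemma upper_eq_sharp {d : ℕ} {Y : Finset (GL (Fin n) F)} (hd1 : 1 ≤ d) (hdn : d ≤ n)
    (hdcode : IsDCodeGL F n d ↑Y)
    (hcard : Y.card = Nat.card {s : Fin (n-d+1) → (Fin n → F) // LinearIndependent F s}) :
    ∀ a b : Fin (n-d+1) → (Fin n → F), LinearIndependent F a → LinearIndependent F b →
      Nat.card {g : GL (Fin n) F // g ∈ (↑Y : Set (GL (Fin n) F)) ∧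
        ∀ m, Matrix.mulVec ((g : GL (Fin n) F) : Matrix (Fin n) (Fin n) F) (a m) = b m} = 1 := by
  intro a b ha hb
  have hinj := code_inj hd1 hdn hdcode (le_refl _) a ha
  have hbij : Function.Bijective (fun g : {g : GL (Fin n) F // g ∈ Y} =>
      (⟨fun m => Matrix.mulVec ((g.1 : GL (Fin n) F) : Matrix (Fin n) (Fin n) F) (a m),
        gl_smul_li g.1 ha⟩ :
        {s : Fin (n-d+1) → (Fin n → F) // LinearIndependent F s})) :=
    (Nat.bijective_iff_injective_and_card _).mpr
      ⟨hinj, by rw [show Nat.card {g : GL (Fin n) F // g ∈ Y} = Y.card from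
        Nat.card_eq_finsetCard Y]; exact hcard⟩
  obtain ⟨⟨g, hg⟩, hgb⟩ := hbij.surjective ⟨b, hb⟩
  have hgb' : ∀ m, Matrix.mulVec ((g : GL (Fin n) F) : Matrix (Fin n) (Fin n) F) (a m) = b m :=
    fun m => congrFun (congrArg Subtype.val hgb) m
  rw [Nat.card_eq_one_iff_unique]
  refine ⟨⟨?_⟩, ⟨⟨g, by simpa using hg, hgb'⟩⟩⟩
  rintro ⟨g1, hg1, hb1⟩ ⟨g2, hg2, hb2⟩
  have heq : (⟨g1, by simpa using hg1⟩ : {g : GL (Fin n) F // g ∈ Y}) =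
      ⟨g2, by simpa using hg2⟩ := by
    apply hinj
    exact Subtype.ext (funext fun m => (hb1 m).trans (hb2 m).symm)
  exact Subtype.ext (by simpa using congrArg Subtype.val heq)

end main2

/-- If `Y ⊆ GL(n,q)` with `|Y| ≥ 2`, `d` is the largest integer in `{1,…,n}` such that `Y` is a
`d`-code and `t` is the largest integer in `{0,…,n}` such that `Y` is a `t`-design, then
`∏_{i=0}^{t−1}(q^n − q^i) ≤ |Y| ≤ ∏_{i=0}^{n−d}(q^n − q^i)`; moreover equality holds in one
of the bounds iff it holds in the other, which happens iff `d = n − t + 1`. -/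
theorem statement13 (q : ℕ) (hq : IsPrimePow q) (F : Type) [Field F] [Fintype F]
    (hF : Fintype.card F = q) (n : ℕ) (hn : 0 < n)
    (Y : Finset (GL (Fin n) F)) (hY2 : 2 ≤ Y.card)
    (d : ℕ) (hd1 : 1 ≤ d) (hdn : d ≤ n) (hdcode : IsDCodeGL F n d ↑Y)
    (hdmax : ∀ d', 1 ≤ d' → d' ≤ n → IsDCodeGL F n d' ↑Y → d' ≤ d)
    (t : ℕ) (htn : t ≤ n) (htdesign : IsTDesignGL F n t ↑Y)
    (htmax : ∀ t', t' ≤ n → IsTDesignGL F n t' ↑Y → t' ≤ t) :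
    (∏ i ∈ Finset.range t, (q ^ n - q ^ i) ≤ Y.card) ∧
    (Y.card ≤ ∏ i ∈ Finset.range (n - d + 1), (q ^ n - q ^ i)) ∧
    ((∏ i ∈ Finset.range t, (q ^ n - q ^ i) = Y.card ↔
      Y.card = ∏ i ∈ Finset.range (n - d + 1), (q ^ n - q ^ i)) ∧
     (∏ i ∈ Finset.range t, (q ^ n - q ^ i) = Y.card ↔ d = n - t + 1)) := by
  subst hF
  set q := Fintype.card F with hqdef
  have hq2 : 2 ≤ q := Fintype.one_lt_card
  set N : ℕ → ℕ := fun k => ∏ i ∈ Finset.range k, (q ^ n - q ^ i) with hN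
  have hfacpos : ∀ i, i < n → 0 < q ^ n - q ^ i := by
    intro i hi
    have := Nat.pow_lt_pow_right hq2 hi
    omega
  have Npos : ∀ k, k ≤ n → 0 < N k := by
    intro k hk
    apply Finset.prod_pos
    intro i hi
    exact hfacpos i (lt_of_lt_of_le (Finset.mem_range.mp hi) hk)
  have Nmono : ∀ s k, s ≤ k → k ≤ n → N s ≤ N k := by
    intro s k hsk hkn
    apply Finset.prod_le_prod_of_subset_of_one_le' (Finset.range_subset_range.mpr hsk)
    intro i hi _
    exact hfacpos i (lt_of_lt_of_le (Finset.mem_range.mp hi) hkn)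
  obtain ⟨r, hr⟩ := htdesign
  obtain ⟨a₀, ha₀⟩ := exists_li_tuple (F := F) (n := n) t htn
  have hcount : Y.card = N t * r := by
    rw [design_count a₀ ha₀ hr, count_LI htn]
  have hr1 : 1 ≤ r := by
    rcases Nat.eq_zero_or_pos r with h0 | h1
    · rw [h0, Nat.mul_zero] at hcount; omega
    · exact h1
  have hlow : N t ≤ Y.card := by
    calc N t = N t * 1 := (Nat.mul_one _).symm
    _ ≤ N t * r := Nat.mul_le_mul_left _ hr1
    _ = Y.card := hcount.symm
  obtain ⟨c₀, hc₀⟩ := exists_li_tuple (F := F) (n := n) (n - d + 1) (by omega)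
  have hup : Y.card ≤ N (n - d + 1) := by
    have hinj := Nat.card_le_card_of_injective _ (code_inj hd1 hdn hdcode (le_refl _) c₀ hc₀)
    rwa [show Nat.card {g : GL (Fin n) F // g ∈ Y} = Y.card from Nat.card_eq_finsetCard Y,
      count_LI (by omega)] at hinj
  -- P → (d = n - t + 1)
  have hB : N t = Y.card → d = n - t + 1 := by
    intro hP
    have ht1 : 1 ≤ t := by
      by_contra h
      have ht0 : t = 0 := by omega
      rw [ht0] at hP
      simp [hN] at hP
      omega
    have hreq : r = 1 :=
      (Nat.eq_of_mul_eq_mul_left (Npos t htn) (by rw [Nat.mul_one]; exact hP.trans hcount)).symm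
    have hcode' : IsDCodeGL F n (n - t + 1) ↑Y := by
      apply sharp_design_code htn
      intro a b ha hb
      rw [hr a b ha hb, hreq]
    have hd_ge : n - t + 1 ≤ d := hdmax (n - t + 1) (by omega) (by omega) hcode'
    by_contra hne
    have hd2 : n - t + 2 ≤ d := by omega
    have ht2 : 2 ≤ t := by omega
    have h2 : N (n - d + 1) ≤ N (t - 1) := Nmono _ _ (by omega) (by omega)
    have h3 : N t = N (t - 1) * (q ^ n - q ^ (t - 1)) := by
      have hps := Finset.prod_range_succ (fun i => q ^ n - q ^ i) (t - 1)
      rw [show t - 1 + 1 = t from by omega] at hps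
      exact hps
    have hf2 : 2 ≤ q ^ n - q ^ (t - 1) := by
      have e1 : 2 ≤ q ^ (t - 1) := le_trans hq2 (Nat.le_self_pow (by omega) q)
      have e2 : q ^ t ≤ q ^ n := Nat.pow_le_pow_right (by omega) htn
      have e3 : q ^ t = q ^ (t - 1) * q := by
        conv_lhs => rw [show t = (t - 1) + 1 from by omega]
        rw [pow_succ]
      have e4 : q ^ (t - 1) * 2 ≤ q ^ (t - 1) * q := Nat.mul_le_mul_left _ hq2
      omega
    have h5 : N (t - 1) * 2 ≤ N (t - 1) * (q ^ n - q ^ (t - 1)) :=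
      Nat.mul_le_mul_left _ hf2
    have h6 : 0 < N (t - 1) := Npos _ (by omega)
    omega
  -- P → Q
  have hPQ : N t = Y.card → Y.card = N (n - d + 1) := by
    intro hP
    have hR := hB hP
    have ht1 : 1 ≤ t := by omega
    have : n - d + 1 = t := by omega
    rw [this]
    exact hP.symm
  -- Q → P
  have hQP : Y.card = N (n - d + 1) → N t = Y.card := by
    intro hQ
    have hsharp := upper_eq_sharp hd1 hdn hdcode (by rw [hQ, count_LI (by omega)])
    have hdes : IsTDesignGL F n (n - d + 1) ↑Y := ⟨1, hsharp⟩
    have hle : n - d + 1 ≤ t := htmax (n - d + 1) (by omega) hdes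
    have : N (n - d + 1) ≤ N t := Nmono _ _ hle htn
    omega
  -- R → P
  have hRP : d = n - t + 1 → N t = Y.card := by
    intro hR
    have ht1 : 1 ≤ t := by omega
    have hidx : n - d + 1 = t := by omega
    rw [hidx] at hup
    omega
  exact ⟨hlow, hup, ⟨fun h => hPQ h, fun h => hQP h⟩, ⟨fun h => hB h, fun h => hRP h⟩⟩
end

section
/- Let q be a prime power and let n and d be integers with 1 ≤ d ≤ n. Then there exists a d-code Y in GL(n,q) (i.e. a subset Y of GL(n,q) with rank(x − y) ≥ d for all distinct x, y ∈ Y) of size |Y| ≥ (1 − 1/(q−1)) · q^{n(n−d+1)}. Moreover, for q = 2 there exists a d-code Y in GL(n,2) of size |Y| ≥ 2^{n(n−d)}. -/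
open Polynomial

/-- There is a field extension of `F` of degree `n`, with `q^n` elements. -/
lemma auxL (F : Type) [Field F] [Fintype F] (n : ℕ) (hn : n ≠ 0) :
    ∃ (L : Type) (_ : Field L) (_ : Algebra F L) (_ : Fintype L),
      Module.finrank F L = n ∧ Fintype.card L = Fintype.card F ^ n := by
  classical
  set q := Fintype.card F with hq
  set g : F[X] := X ^ q ^ n - X with hg
  let L := Polynomial.SplittingField g
  haveI : IsSplittingField F L g := inferInstanceAs (IsSplittingField F (Polynomial.SplittingField g) g)
  haveI : FiniteDimensional F L := inferInstanceAs (FiniteDimensional F (Polynomial.SplittingField g))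
  haveI : Finite L := Module.finite_of_finite F
  haveI : Fintype L := Fintype.ofFinite L
  set p := ringChar F with hpdef
  haveI hfact : Fact p.Prime := ⟨CharP.char_is_prime F p⟩
  have hpp : p.Prime := hfact.out
  haveI : CharP F p := ringChar.charP F
  obtain ⟨m, -, hqm⟩ := FiniteField.card F p
  have hmn : (m : ℕ) * n ≠ 0 := by positivity
  have hqn : q ^ n = p ^ ((m : ℕ) * n) := by rw [hq, hqm, pow_mul]
  haveI : CharP L p := charP_of_injective_algebraMap (algebraMap F L).injective p
  haveI : ExpChar L p := ExpChar.prime hpp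
  have hgne : g ≠ 0 := by
    rw [hg, hqn]
    exact FiniteField.X_pow_card_pow_sub_X_ne_zero F hmn hpp.one_lt
  have hsep : g.Separable := by
    rw [hg]
    exact galois_poly_separable p (q ^ n) (hqn ▸ dvd_pow_self p hmn)
  have hdeg : g.natDegree = q ^ n := by
    rw [hg, hqn]
    exact FiniteField.X_pow_card_pow_sub_X_natDegree_eq F hmn hpp.one_lt
  -- the Frobenius-power algebra endomorphism
  let φ : L →ₐ[F] L :=
    { toRingHom := iterateFrobenius L p ((m : ℕ) * n)
      commutes' := fun c => by
        show (algebraMap F L c) ^ p ^ ((m : ℕ) * n) = algebraMap F L c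
        rw [← hqn, ← map_pow, FiniteField.pow_card_pow] }
  have hfix : ∀ x : L, x ^ q ^ n = x := by
    have htop : AlgHom.equalizer φ (AlgHom.id F L) = ⊤ := by
      rw [← top_le_iff, ← IsSplittingField.adjoin_rootSet L g]
      apply Algebra.adjoin_le
      intro x hx
      rw [mem_rootSet_of_ne hgne] at hx
      have : x ^ q ^ n - x = 0 := by
        simpa [hg, map_pow, sub_eq_zero] using hx
      show φ x = x
      simp only [φ, AlgHom.coe_mk, iterateFrobenius_def, ← hqn]
      rwa [sub_eq_zero] at this
    intro x
    have hx : x ∈ AlgHom.equalizer φ (AlgHom.id F L) := htop ▸ trivial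
    have : φ x = x := hx
    simpa only [φ, AlgHom.coe_mk, iterateFrobenius_def, ← hqn] using this
  have huniv : g.rootSet L = Set.univ := by
    ext x
    simp only [Set.mem_univ, iff_true, mem_rootSet_of_ne hgne]
    simp [hg, map_pow, sub_eq_zero, hfix x]
  have hcardL : Fintype.card L = q ^ n := by
    have h1 : Fintype.card (g.rootSet L) = g.natDegree :=
      card_rootSet_eq_natDegree hsep (SplittingField.splits g)
    rw [hdeg] at h1
    have h2 : Nat.card (g.rootSet L) = Nat.card L := by
      rw [huniv]; exact Nat.card_congr (Equiv.Set.univ L)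
    rw [Nat.card_eq_fintype_card, Nat.card_eq_fintype_card] at h2
    rw [← h2, h1]
  refine ⟨L, inferInstance, inferInstance, inferInstance, ?_, hcardL⟩
  have := Module.card_eq_pow_finrank (K := F) (V := L)
  rw [hcardL] at this
  exact (Nat.pow_right_injective Fintype.one_lt_card this.symm)

/-- A Gabidulin/Delsarte-style additive MRD code in the space of `n × n` matrices. -/
lemma auxCode (F : Type) [Field F] [Fintype F] (n d k : ℕ) (hd1 : 1 ≤ d) (hdn : d ≤ n)
    (hk : k = n - d + 1) :
    ∃ S : AddSubgroup (Matrix (Fin n) (Fin n) F),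
      Nat.card S = Fintype.card F ^ (n * k) ∧
      ∀ M ∈ S, M ≠ 0 → d ≤ Matrix.rank M := by
  classical
  have hn : n ≠ 0 := by omega
  have hk1 : 1 ≤ k := by omega
  have hkn : k - 1 < n := by omega
  set q := Fintype.card F with hq
  have hq2 : 1 < q := Fintype.one_lt_card
  obtain ⟨L, _, _, _, hrank, hcardL⟩ := auxL F n hn
  haveI : FiniteDimensional F L := FiniteDimensional.of_finrank_pos (by omega)
  set p := ringChar F with hpdef
  haveI hfact : Fact p.Prime := ⟨CharP.char_is_prime F p⟩
  haveI : CharP F p := ringChar.charP F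
  obtain ⟨m, -, hqm⟩ := FiniteField.card F p
  haveI : CharP L p := charP_of_injective_algebraMap (algebraMap F L).injective p
  have hadd : ∀ (j : ℕ) (x y : L), (x + y) ^ q ^ j = x ^ q ^ j + y ^ q ^ j := by
    intro j x y
    have : q ^ j = p ^ ((m : ℕ) * j) := by rw [hq, hqm, pow_mul]
    rw [this, add_pow_char_pow]
  have hsmul : ∀ (j : ℕ) (c : F) (x : L), (c • x) ^ q ^ j = c • x ^ q ^ j := by
    intro j c x
    rw [Algebra.smul_def, mul_pow, ← map_pow, FiniteField.pow_card_pow, Algebra.smul_def]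
  set T : (Fin k → L) → (L →ₗ[F] L) := fun a =>
    { toFun := fun x => ∑ i : Fin k, a i * x ^ q ^ (i : ℕ)
      map_add' := by
        intro x y
        simp only [hadd, mul_add]
        rw [Finset.sum_add_distrib]
      map_smul' := by
        intro c x
        simp only [hsmul, RingHom.id_apply]
        rw [Finset.smul_sum]
        exact Finset.sum_congr rfl fun i _ => (mul_smul_comm _ _ _) } with hT
  have hTapply : ∀ a x, T a x = ∑ i : Fin k, a i * x ^ q ^ (i : ℕ) := fun a x => rfl
  set P : (Fin k → L) → L[X] := fun a => ∑ i : Fin k, C (a i) * X ^ (q ^ (i : ℕ)) with hP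
  have heval : ∀ a x, (P a).eval x = T a x := by
    intro a x
    rw [hP, hTapply]
    simp [eval_finset_sum]
  have hcoeff : ∀ a (i : Fin k), (P a).coeff (q ^ (i : ℕ)) = a i := by
    intro a i
    rw [hP]
    simp only [finset_sum_coeff, coeff_C_mul, coeff_X_pow]
    rw [Finset.sum_eq_single i]
    · simp
    · intro j _ hj
      have : ¬ (q ^ (i : ℕ) = q ^ (j : ℕ)) := by
        intro h
        exact hj (Fin.ext (Nat.pow_right_injective hq2 h).symm)
      simp [this]
    · simp
  have hPdeg : ∀ a, (P a).natDegree ≤ q ^ (k - 1) := by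
    intro a
    rw [hP]
    apply natDegree_sum_le_of_forall_le
    intro i _
    refine le_trans (natDegree_C_mul_X_pow_le _ _) ?_
    exact Nat.pow_le_pow_right (le_of_lt (by omega)) (by omega)
  have hPne : ∀ a, a ≠ 0 → P a ≠ 0 := by
    intro a ha hc
    apply ha
    funext i
    have := hcoeff a i
    rw [hc, coeff_zero] at this
    exact this.symm
  have hker : ∀ a, a ≠ 0 → Module.finrank F (LinearMap.ker (T a)) ≤ k - 1 := by
    intro a ha
    have h1 : ((LinearMap.ker (T a) : Set L).toFinset) ⊆ (P a).roots.toFinset := by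
      intro x hx
      rw [Set.mem_toFinset] at hx
      rw [Multiset.mem_toFinset, mem_roots (hPne a ha)]
      show (P a).eval x = 0
      rw [heval]; exact hx
    have h2 : Fintype.card (LinearMap.ker (T a)) ≤ q ^ (k - 1) := by
      calc Fintype.card (LinearMap.ker (T a)) = ((LinearMap.ker (T a) : Set L).toFinset).card :=
            (Set.toFinset_card _).symm
        _ ≤ ((P a).roots.toFinset).card := Finset.card_le_card h1
        _ ≤ Multiset.card (P a).roots := Multiset.toFinset_card_le _
        _ ≤ (P a).natDegree := Polynomial.card_roots' _
        _ ≤ q ^ (k - 1) := hPdeg a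
    have h3 : Fintype.card (LinearMap.ker (T a)) = q ^ Module.finrank F (LinearMap.ker (T a)) :=
      Module.card_eq_pow_finrank
    rw [h3] at h2
    exact (Nat.pow_le_pow_iff_right hq2).mp h2
  have hrk : ∀ a, a ≠ 0 → d ≤ Module.finrank F (LinearMap.range (T a)) := by
    intro a ha
    have := LinearMap.finrank_range_add_finrank_ker (T a)
    rw [hrank] at this
    have h2 := hker a ha
    omega
  have hT0 : ∀ a, T a = 0 → a = 0 := by
    intro a hTa
    by_contra ha
    have hall : (Finset.univ : Finset L) ⊆ (P a).roots.toFinset := by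
      intro x _
      rw [Multiset.mem_toFinset, mem_roots (hPne a ha)]
      show (P a).eval x = 0
      rw [heval, hTa]
      rfl
    have : Fintype.card L ≤ q ^ (k - 1) := by
      calc Fintype.card L = (Finset.univ : Finset L).card := (Finset.card_univ).symm
        _ ≤ ((P a).roots.toFinset).card := Finset.card_le_card hall
        _ ≤ Multiset.card (P a).roots := Multiset.toFinset_card_le _
        _ ≤ (P a).natDegree := Polynomial.card_roots' _
        _ ≤ q ^ (k - 1) := hPdeg a
    rw [hcardL] at this
    exact absurd this (by
      push_neg
      exact Nat.pow_lt_pow_right hq2 hkn)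
  have hTadd : ∀ a b, T (a + b) = T a + T b := by
    intro a b
    apply LinearMap.ext
    intro x
    simp only [hTapply, LinearMap.add_apply, Pi.add_apply, add_mul]
    rw [Finset.sum_add_distrib]
  set b : Module.Basis (Fin n) F L := Module.finBasisOfFinrankEq F L hrank with hb
  set e := LinearMap.toMatrix b b with he
  set ψ : (Fin k → L) →+ Matrix (Fin n) (Fin n) F :=
    AddMonoidHom.mk' (fun a => e (T a))
      (by intro a b'; show e (T (a + b')) = e (T a) + e (T b'); rw [hTadd, map_add]) with hψ
  have hψinj : Function.Injective ψ := by
    rw [injective_iff_map_eq_zero]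
    intro a ha
    apply hT0
    apply e.injective
    rw [map_zero]
    exact ha
  refine ⟨ψ.range, ?_, ?_⟩
  · have h1 : Nat.card ψ.range = Nat.card (Fin k → L) := by
      have := Nat.card_range_of_injective hψinj
      rw [← this]
      rfl
    rw [h1, Nat.card_eq_fintype_card, Fintype.card_fun, hcardL, Fintype.card_fin, ← pow_mul]
  · rintro M ⟨a, rfl⟩ hM0
    have ha : a ≠ 0 := by
      rintro rfl
      apply hM0
      show e (T 0) = 0
      have : T 0 = 0 := by
        apply LinearMap.ext
        intro x
        simp [hTapply]
      rw [this, map_zero]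
    have : (ψ a : Matrix (Fin n) (Fin n) F).rank
        = Module.finrank F (LinearMap.range (T a)) := by
      show (e (T a)).rank = _
      rw [Matrix.rank_eq_finrank_range_toLin (e (T a)) b b]
      rw [he, Matrix.toLin_toMatrix]
    rw [this]
    exact hrk a ha

lemma auxSum (q : ℕ) (hq : 2 ≤ q) (n : ℕ) :
    ∑ j ∈ Finset.range n, (1 / (q:ℝ)) ^ (j + 1) ≤ (1 - (1/(q:ℝ))^n) / ((q:ℝ) - 1) := by
  have hq1 : (1:ℝ) < (q:ℝ) := by exact_mod_cast hq.trans_lt' one_lt_two |>.trans_le le_rfl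
  induction n with
  | zero => simp
  | succ n ih =>
    rw [Finset.sum_range_succ]
    have hpow : (0:ℝ) < (1/(q:ℝ))^n := by positivity
    have hqpos : (0:ℝ) < (q:ℝ) := by linarith
    have key : (1/(q:ℝ))^n - (1/(q:ℝ))^(n+1) = (1/(q:ℝ))^(n+1) * ((q:ℝ) - 1) := by
      rw [pow_succ]
      linear_combination (-(1/(q:ℝ))^n) * one_div_mul_cancel (ne_of_gt hqpos)
    have hne : ((q:ℝ) - 1) ≠ 0 := by linarith
    have e : (1 - (1/(q:ℝ))^(n+1))/((q:ℝ)-1)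
        = (1 - (1/(q:ℝ))^n)/((q:ℝ)-1) + (1/(q:ℝ))^(n+1) := by
      rw [div_add' _ _ _ hne]
      congr 1
      linarith [key]
    rw [e]
    linarith [ih]

lemma auxProdBound (q : ℕ) (hq : 2 ≤ q) (n : ℕ) :
    1 - 1/((q:ℝ) - 1) ≤ ∏ j ∈ Finset.range n, (1 - (1/(q:ℝ)) ^ (j + 1)) := by
  have hq1 : (1:ℝ) < (q:ℝ) := by exact_mod_cast hq.trans_lt' one_lt_two |>.trans_le le_rfl
  have hS : ∀ m, ∑ j ∈ Finset.range m, (1 / (q:ℝ)) ^ (j + 1) ≤ 1 / ((q:ℝ) - 1) := by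
    intro m
    refine (auxSum q hq m).trans ?_
    have hpow : (0:ℝ) ≤ (1/(q:ℝ))^m := by positivity
    apply div_le_div_of_nonneg_right ?_ (by linarith) |>.trans_eq rfl
    · linarith
  have main : ∀ m, 1 - ∑ j ∈ Finset.range m, (1 / (q:ℝ)) ^ (j + 1)
      ≤ ∏ j ∈ Finset.range m, (1 - (1/(q:ℝ)) ^ (j + 1)) := by
    intro m
    induction m with
    | zero => simp
    | succ m ih =>
      rw [Finset.sum_range_succ, Finset.prod_range_succ]
      have ht0 : (0:ℝ) ≤ (1/(q:ℝ))^(m+1) := by positivity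
      have ht1 : (1/(q:ℝ))^(m+1) ≤ 1 := by
        apply pow_le_one₀ (by positivity)
        rw [div_le_one (by linarith)]; linarith
      have hS0 : (0:ℝ) ≤ ∑ j ∈ Finset.range m, (1 / (q:ℝ)) ^ (j + 1) :=
        Finset.sum_nonneg fun j _ => by positivity
      nlinarith [ih, ht0, ht1, hS0]
  calc 1 - 1/((q:ℝ) - 1) ≤ 1 - ∑ j ∈ Finset.range n, (1 / (q:ℝ)) ^ (j + 1) := by
        linarith [hS n]
    _ ≤ _ := main n

lemma auxGLBound (q : ℕ) (hq : 2 ≤ q) (n : ℕ) :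
    (1 - 1/((q:ℝ)-1)) * (q:ℝ)^(n*n) ≤ ∏ i ∈ Finset.range n, ((q:ℝ)^n - (q:ℝ)^i) := by
  have hq0 : (0:ℝ) < (q:ℝ) := by positivity
  have hfac : ∀ i ∈ Finset.range n,
      ((q:ℝ)^n - (q:ℝ)^i) = (q:ℝ)^n * (1 - (1/(q:ℝ))^((n-1-i)+1)) := by
    intro i hi
    rw [Finset.mem_range] at hi
    have h1 : (n-1-i)+1 = n - i := by omega
    have h2 : (q:ℝ)^i * (q:ℝ)^(n-i) = (q:ℝ)^n := by rw [← pow_add]; congr 1; omega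
    have h3 : ((q:ℝ)^(n-i)) ≠ 0 := by positivity
    rw [h1, mul_sub, mul_one]
    congr 1
    rw [one_div, inv_pow, ← h2, mul_assoc, mul_inv_cancel₀ h3, mul_one]
  rw [Finset.prod_congr rfl hfac, Finset.prod_mul_distrib, Finset.prod_const,
    Finset.card_range, ← pow_mul,
    Finset.prod_range_reflect (fun j => 1 - (1/(q:ℝ))^(j+1)) n]
  rw [mul_comm]
  apply mul_le_mul_of_nonneg_left (auxProdBound q hq n) (by positivity)

lemma aux2 (n : ℕ) : 2^(n*n - n) ≤ ∏ i ∈ Finset.range n, (2^n - 2^i) := by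
  have h1 : ∀ i ∈ Finset.range n, 2^(n-1) ≤ 2^n - 2^i := by
    intro i hi
    rw [Finset.mem_range] at hi
    have h2 : 2^i ≤ 2^(n-1) := Nat.pow_le_pow_right (by norm_num) (by omega)
    have h3 : 2^n = 2^(n-1) + 2^(n-1) := by
      rw [← two_mul, ← pow_succ']
      congr 1
      omega
    omega
  calc 2^(n*n - n) = (2^(n-1))^n := by
        rw [← pow_mul]
        congr 1
        have := Nat.sub_mul n 1 n
        omega
    _ = ∏ _i ∈ Finset.range n, 2^(n-1) := by rw [Finset.prod_const, Finset.card_range]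
    _ ≤ ∏ i ∈ Finset.range n, (2^n - 2^i) := Finset.prod_le_prod' h1

/-- For every `1 ≤ d ≤ n` there is a `d`-code in `GL(n,q)` of size at least
`(1 − 1/(q−1)) q^{n(n−d+1)}`, and for `q = 2` a `d`-code of size at least `2^{n(n−d)}`. -/
theorem statement15 (q : ℕ) (hq : IsPrimePow q) (F : Type) [Field F] [Fintype F]
    (hF : Fintype.card F = q) (n d : ℕ) (hd1 : 1 ≤ d) (hdn : d ≤ n) :
    (∃ Y : Finset (GL (Fin n) F), IsDCodeGL F n d ↑Y ∧
      (1 - 1 / ((q : ℝ) - 1)) * (q : ℝ) ^ (n * (n - d + 1)) ≤ (Y.card : ℝ)) ∧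
    (q = 2 → ∃ Y : Finset (GL (Fin n) F), IsDCodeGL F n d ↑Y ∧
      2 ^ (n * (n - d)) ≤ Y.card) := by
  classical
  subst hF
  set q := Fintype.card F with hqdef
  have hq2 : 2 ≤ q := Fintype.one_lt_card
  have hn1 : 1 ≤ n := le_trans hd1 hdn
  set k := n - d + 1 with hkdef
  obtain ⟨S, hScard, hSrank⟩ := auxCode F n d k hd1 hdn rfl
  haveI : Fintype (Matrix (Fin n) (Fin n) F ⧸ S) := Fintype.ofFinite _
  set Qt := Matrix (Fin n) (Fin n) F ⧸ S with hQtdef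
  set π := QuotientAddGroup.mk' S with hπ
  set h : GL (Fin n) F → Qt := fun g => π (g : Matrix (Fin n) (Fin n) F) with hh
  obtain ⟨c, -, hc⟩ := Finset.exists_max_image (Finset.univ : Finset Qt)
      (fun c => (Finset.univ.filter (fun g : GL (Fin n) F => h g = c)).card)
      ⟨0, Finset.mem_univ 0⟩
  set Y : Finset (GL (Fin n) F) := Finset.univ.filter (fun g => h g = c) with hY
  have hcode : IsDCodeGL F n d ↑Y := by
    intro x hx y hy hxy
    rw [Finset.mem_coe, hY, Finset.mem_filter] at hx hy
    have hmem : ((x : Matrix (Fin n) (Fin n) F) - (y : Matrix (Fin n) (Fin n) F)) ∈ S := by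
      have h0 : π ((x : Matrix (Fin n) (Fin n) F) - (y : Matrix (Fin n) (Fin n) F)) = 0 := by
        rw [map_sub]
        rw [show π (x : Matrix (Fin n) (Fin n) F) = c from hx.2,
          show π (y : Matrix (Fin n) (Fin n) F) = c from hy.2]
        simp
      exact (QuotientAddGroup.eq_zero_iff _).mp h0
    have hne : ((x : Matrix (Fin n) (Fin n) F) - (y : Matrix (Fin n) (Fin n) F)) ≠ 0 := by
      intro h0
      exact hxy (Units.ext (sub_eq_zero.mp h0))
    exact hSrank _ hmem hne
  have hcount : Fintype.card (GL (Fin n) F) ≤ Fintype.card Qt * Y.card := by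
    rw [← Finset.card_univ,
      Finset.card_eq_sum_card_fiberwise (f := h) (t := Finset.univ)
        (fun x _ => Finset.mem_univ (h x))]
    calc ∑ c' ∈ Finset.univ, (Finset.univ.filter (fun g : GL (Fin n) F => h g = c')).card
        ≤ (Finset.univ : Finset Qt).card • Y.card :=
          Finset.sum_le_card_nsmul _ _ _ (fun c' _ => hc c' (Finset.mem_univ c'))
      _ = Fintype.card Qt * Y.card := by rw [Finset.card_univ, smul_eq_mul]
  have hMcard : Fintype.card (Matrix (Fin n) (Fin n) F) = q ^ (n*n) := by
    show Fintype.card (Fin n → Fin n → F) = _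
    simp [Fintype.card_fun, ← pow_mul, hqdef]
  have hQtcard : Fintype.card Qt * q ^ (n*k) = q ^ (n*n) := by
    have hq1 := AddSubgroup.card_eq_card_quotient_mul_card_addSubgroup S
    rw [Nat.card_eq_fintype_card, Nat.card_eq_fintype_card, hScard, hMcard] at hq1
    exact hq1.symm
  have hQtval : Fintype.card Qt = q ^ (n*(d-1)) := by
    have h2 : q ^ (n*(d-1)) * q ^ (n*k) = q ^ (n*n) := by
      rw [← pow_add]
      congr 1
      have h3 : (d-1) + k = n := by omega
      rw [← Nat.mul_add, h3]
    have hpos : 0 < q ^ (n*k) := by positivity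
    exact Nat.eq_of_mul_eq_mul_right hpos (hQtcard.trans h2.symm)
  have hGL : Fintype.card (GL (Fin n) F) = ∏ i ∈ Finset.range n, (q^n - q^i) := by
    have h4 := Matrix.card_GL_field (𝔽 := F) n
    rw [Nat.card_eq_fintype_card] at h4
    rw [h4]
    exact Fin.prod_univ_eq_prod_range (fun i => q^n - q^i) n
  constructor
  · refine ⟨Y, hcode, ?_⟩
    have hreal1 : ((1:ℝ) - 1/((q:ℝ)-1)) * (q:ℝ)^(n*n) ≤ (Fintype.card (GL (Fin n) F) : ℝ) := by
      rw [hGL]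
      refine le_trans (auxGLBound q hq2 n) ?_
      rw [Nat.cast_prod]
      apply le_of_eq
      apply Finset.prod_congr rfl
      intro i hi
      rw [Finset.mem_range] at hi
      rw [Nat.cast_sub (Nat.pow_le_pow_right (by omega) (by omega))]
      push_cast
      ring
    have hcount' : (Fintype.card (GL (Fin n) F) : ℝ) ≤ (q:ℝ)^(n*(d-1)) * Y.card := by
      have h5 := hcount
      rw [hQtval] at h5
      exact_mod_cast h5
    have hqpow : (0:ℝ) < (q:ℝ)^(n*(d-1)) := by positivity
    calc (1 - 1/((q:ℝ)-1)) * (q:ℝ)^(n*k)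
        = ((1 - 1/((q:ℝ)-1)) * (q:ℝ)^(n*n)) / (q:ℝ)^(n*(d-1)) := by
          rw [mul_div_assoc]
          congr 1
          rw [eq_div_iff (ne_of_gt hqpow), ← pow_add]
          congr 1
          have h3 : k + (d-1) = n := by omega
          rw [← Nat.mul_add, h3]
      _ ≤ (Fintype.card (GL (Fin n) F) : ℝ) / (q:ℝ)^(n*(d-1)) := by gcongr
      _ ≤ (Y.card : ℝ) := by
          rw [div_le_iff₀ hqpow]
          linarith [hcount']
  · intro hq2'
    refine ⟨Y, hcode, ?_⟩
    have exp2 : n*(d-1) + n*(n-d) = n*n - n := by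
      have h3 : (d-1) + (n-d) = n-1 := by omega
      rw [← Nat.mul_add, h3]
      have := Nat.mul_sub n n 1
      omega
    have hfin : q^(n*(d-1)) * 2^(n*(n-d)) ≤ q^(n*(d-1)) * Y.card := by
      calc q^(n*(d-1)) * 2^(n*(n-d)) = 2^(n*(d-1)) * 2^(n*(n-d)) := by rw [hq2']
        _ = 2^(n*n - n) := by rw [← pow_add, exp2]
        _ ≤ ∏ i ∈ Finset.range n, (2^n - 2^i) := aux2 n
        _ = Fintype.card (GL (Fin n) F) := by rw [hGL, hq2']
        _ ≤ Fintype.card Qt * Y.card := hcount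
        _ = q^(n*(d-1)) * Y.card := by rw [hQtval]
    exact Nat.le_of_mul_le_mul_left hfin (by positivity)
end
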